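/- arXiv:1001.0348 — 4 statements merged into one kernel-verified Lean document; each statement's English description precedes it below -/
import Mathlib

section
/- Let p > 3 be a prime and let A, B be integers with p ∤ A. Then the rational number ∑_{k=1}^{p-1} v_k(A,B)·H_k/(k·A^k) is congruent to 0 modulo p (i.e., it equals p times a rational number that is p-integral). -/
open Finset Polynomial

/-- The Lucas sequence `u_n(A,B)`. -/
def lucasU (A B : ℤ) : ℕ → ℤ
  | 0 => 0
  | 1 => 1
  | n + 2 => A * lucasU A B (n + 1) - B * lucasU A B n

/-- The companion Lucas sequence `v_n(A,B)`. -/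
def lucasV (A B : ℤ) : ℕ → ℤ
  | 0 => 2
  | 1 => A
  | n + 2 => A * lucasV A B (n + 1) - B * lucasV A B n

/-- `x ≡ y (mod p^m)` for rational numbers: `x - y = p^m * r` with `p ∤ den r`. -/
def ratCong (p m : ℕ) (x y : ℚ) : Prop :=
  ∃ r : ℚ, x - y = (p : ℚ) ^ m * r ∧ ¬ (p ∣ r.den)

section SumLemmas
variable (p : ℕ) [hpF : Fact p.Prime]

/-- harmonic number in `ZMod p` -/
def Hb (k : ℕ) : ZMod p := ∑ j ∈ Icc 1 k, ((j : ZMod p))⁻¹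

lemma zmodTwoNeZero (hp3 : 3 < p) : (2 : ZMod p) ≠ 0 := by
  intro h
  have h2 : ((2 : ℕ) : ZMod p) = 0 := by exact_mod_cast h
  rw [ZMod.natCast_eq_zero_iff] at h2
  have := Nat.le_of_dvd (by norm_num) h2
  omega

lemma zmodThreeNeZero (hp3 : 3 < p) : (3 : ZMod p) ≠ 0 := by
  intro h
  have h2 : ((3 : ℕ) : ZMod p) = 0 := by exact_mod_cast h
  rw [ZMod.natCast_eq_zero_iff] at h2
  have := Nat.le_of_dvd (by norm_num) h2
  omega

lemma sum_univ_id (hp3 : 3 < p) : ∑ x : ZMod p, x = 0 := by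
  have key : ∑ x : ZMod p, (2 * x) = ∑ x : ZMod p, x :=
    Fintype.sum_bijective (fun x : ZMod p => 2 * x)
      (mulLeft_bijective₀ 2 (zmodTwoNeZero p hp3)) _ _ (fun x => rfl)
  rw [← Finset.mul_sum] at key
  linear_combination key

lemma sum_univ_sq (hp3 : 3 < p) : ∑ x : ZMod p, x ^ 2 = 0 := by
  have key : ∑ x : ZMod p, (2 * x) ^ 2 = ∑ x : ZMod p, x ^ 2 :=
    Fintype.sum_bijective (fun x : ZMod p => 2 * x)
      (mulLeft_bijective₀ 2 (zmodTwoNeZero p hp3)) _ _ (fun x => rfl)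
  have h4 : ∑ x : ZMod p, (2 * x) ^ 2 = 4 * ∑ x : ZMod p, x ^ 2 := by
    rw [Finset.mul_sum]; apply Finset.sum_congr rfl; intro x _; ring
  rw [h4] at key
  have h3 : (3 : ZMod p) * ∑ x : ZMod p, x ^ 2 = 0 := by linear_combination key
  exact (mul_eq_zero.mp h3).resolve_left (zmodThreeNeZero p hp3)

lemma sum_univ_inv (hp3 : 3 < p) : ∑ x : ZMod p, x⁻¹ = 0 := by
  have : ∑ x : ZMod p, x⁻¹ = ∑ x : ZMod p, x :=
    Fintype.sum_bijective (fun x : ZMod p => x⁻¹) inv_involutive.bijective _ _ (fun x => rfl)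
  rw [this]; exact sum_univ_id p hp3

lemma sum_univ_inv_sq (hp3 : 3 < p) : ∑ x : ZMod p, (x⁻¹) ^ 2 = 0 := by
  have : ∑ x : ZMod p, (x⁻¹) ^ 2 = ∑ x : ZMod p, x ^ 2 :=
    Fintype.sum_bijective (fun x : ZMod p => x⁻¹) inv_involutive.bijective _ _ (fun x => rfl)
  rw [this]; exact sum_univ_sq p hp3

lemma cast_ne_zero_of_Icc {k : ℕ} (hk : k ∈ Icc 1 (p - 1)) : ((k : ZMod p)) ≠ 0 := by
  intro h
  rw [ZMod.natCast_eq_zero_iff] at h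
  rw [Finset.mem_Icc] at hk
  have hple := Nat.le_of_dvd (by omega) h
  have := hpF.out.two_le
  omega

lemma sum_Icc_to_univ (g : ZMod p → ZMod p) (hg : g 0 = 0) :
    ∑ k ∈ Icc 1 (p - 1), g ((k : ZMod p)) = ∑ x : ZMod p, g x := by
  haveI : NeZero p := ⟨hpF.out.ne_zero⟩
  rw [← Finset.sum_erase Finset.univ (by simpa using hg : g 0 = 0)]
  refine Finset.sum_nbij' (fun k => ((k : ZMod p))) (fun x => x.val) ?_ ?_ ?_ ?_ (fun a _ => rfl)
  · intro a ha
    exact Finset.mem_erase.mpr ⟨cast_ne_zero_of_Icc p ha, Finset.mem_univ _⟩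
  · intro x hx
    rw [Finset.mem_erase] at hx
    rw [Finset.mem_Icc]
    have h1 : x.val ≠ 0 := fun h => hx.1 (by rwa [ZMod.val_eq_zero] at h)
    have h2 := ZMod.val_lt x
    show 1 ≤ x.val ∧ x.val ≤ p - 1
    omega
  · intro a ha
    rw [Finset.mem_Icc] at ha
    exact ZMod.val_cast_of_lt (by omega)
  · intro x _
    exact ZMod.natCast_rightInverse x

lemma hD (hp3 : 3 < p) : ∑ k ∈ Icc 1 (p - 1), ((k : ZMod p))⁻¹ = 0 := by
  rw [sum_Icc_to_univ p (fun x => x⁻¹) inv_zero]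
  exact sum_univ_inv p hp3

lemma hQ (hp3 : 3 < p) : ∑ k ∈ Icc 1 (p - 1), (((k : ZMod p))⁻¹) ^ 2 = 0 := by
  rw [sum_Icc_to_univ p (fun x => (x⁻¹) ^ 2) (by simp)]
  exact sum_univ_inv_sq p hp3

lemma Hb_zero : Hb p 0 = 0 := by simp [Hb]

lemma Hb_succ (k : ℕ) : Hb p (k + 1) = Hb p k + (((k + 1 : ℕ) : ZMod p))⁻¹ :=
  Finset.sum_Icc_succ_top (by omega) _

lemma Hb_last (hp3 : 3 < p) : Hb p (p - 1) = 0 := hD p hp3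

lemma sum_Icc_one (n : ℕ) (f : ℕ → ZMod p) :
    ∑ k ∈ Icc 1 n, f k = ∑ i ∈ range n, f (i + 1) := by
  rw [← Finset.Ico_add_one_right_eq_Icc, Finset.sum_Ico_eq_sum_range]
  simp [add_comm]

lemma sum_H_div (hp3 : 3 < p) :
    ∑ k ∈ Icc 1 (p - 1), ((k : ZMod p))⁻¹ * Hb p k = 0 := by
  have tele : ∑ i ∈ range (p - 1), ((Hb p (i + 1)) ^ 2 - (Hb p i) ^ 2) = 0 := by
    rw [Finset.sum_range_sub (fun i => (Hb p i) ^ 2)]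
    simp [Hb_last p hp3, Hb_zero]
  have expand : ∀ i : ℕ, (Hb p (i + 1)) ^ 2 - (Hb p i) ^ 2
      = 2 * ((((i + 1 : ℕ) : ZMod p))⁻¹ * Hb p (i + 1)) - ((((i + 1 : ℕ) : ZMod p))⁻¹) ^ 2 := by
    intro i; rw [Hb_succ]; ring
  rw [Finset.sum_congr rfl (fun i _ => expand i)] at tele
  rw [Finset.sum_sub_distrib, ← Finset.mul_sum] at tele
  rw [← sum_Icc_one p (p - 1) (fun k => ((k : ZMod p))⁻¹ * Hb p k)] at tele
  rw [← sum_Icc_one p (p - 1) (fun k => (((k : ZMod p))⁻¹) ^ 2)] at tele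
  rw [hQ p hp3, sub_zero] at tele
  exact (mul_eq_zero.mp tele).resolve_left (zmodTwoNeZero p hp3)

end SumLemmas
section PolyLemmas
variable (p : ℕ) [hpF : Fact p.Prime]

noncomputable def Lpoly : Polynomial (ZMod p) :=
  ∑ k ∈ Icc 1 (p - 1), Polynomial.C (((k : ZMod p))⁻¹) * Polynomial.X ^ k

noncomputable def hpoly : Polynomial (ZMod p) :=
  ∑ k ∈ Icc 1 (p - 1), Polynomial.C (Hb p k) * Polynomial.X ^ k

noncomputable def Gpoly : Polynomial (ZMod p) :=
  ∑ k ∈ Icc 1 (p - 1), Polynomial.C (Hb p k * ((k : ZMod p))⁻¹) * Polynomial.X ^ k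

lemma coeff_sum_Icc (a : ℕ → ZMod p) (m : ℕ) :
    (∑ k ∈ Icc 1 (p - 1), Polynomial.C (a k) * Polynomial.X ^ k).coeff m
      = if m ∈ Icc 1 (p - 1) then a m else 0 := by
  rw [Polynomial.finset_sum_coeff]
  simp only [Polynomial.coeff_C_mul, Polynomial.coeff_X_pow, mul_ite, mul_one, mul_zero]
  exact Finset.sum_ite_eq (Icc 1 (p - 1)) m a

lemma finset_sum_comp {ι : Type*} (s : Finset ι) (f : ι → Polynomial (ZMod p))
    (q : Polynomial (ZMod p)) : (∑ i ∈ s, f i).comp q = ∑ i ∈ s, (f i).comp q := by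
  classical
  induction s using Finset.induction_on with
  | empty => simp
  | insert _ _ h ih => rw [Finset.sum_insert h, Finset.sum_insert h, Polynomial.add_comp, ih]

lemma one_sub_mul_hpoly (hp3 : 3 < p) : (1 - Polynomial.X) * hpoly p = Lpoly p := by
  ext m
  rw [sub_mul, one_mul, Polynomial.coeff_sub]
  match m with
  | 0 =>
    rw [Polynomial.mul_coeff_zero]
    simp [hpoly, Lpoly, coeff_sum_Icc]
  | m + 1 =>
    rw [Polynomial.coeff_X_mul]
    simp only [hpoly, Lpoly, coeff_sum_Icc, Finset.mem_Icc]
    have hple := hpF.out.two_le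
    split_ifs with h1 h2 h2
    · rw [Hb_succ]; ring
    · have : m = 0 := by omega
      subst this
      rw [Hb_succ, Hb_zero]; ring
    · have : m = p - 1 := by omega
      subst this
      rw [Hb_last p hp3]; ring
    · ring

lemma choose_cast (hp3 : 3 < p) : ∀ m : ℕ, m ≤ p - 1 →
    (((p - 1).choose m : ℕ) : ZMod p) = (-1 : ZMod p) ^ m := by
  intro m
  induction m with
  | zero => simp
  | succ n ih =>
    intro hm
    have hn : n ≤ p - 1 := by omega
    have hp1 : p - 1 + 1 = p := by omega
    have hpas : p.choose (n + 1) = (p - 1).choose n + (p - 1).choose (n + 1) := by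
      conv_lhs => rw [← hp1]
      exact Nat.choose_succ_succ _ _
    have hdvd : ((p.choose (n + 1) : ℕ) : ZMod p) = 0 := by
      rw [ZMod.natCast_eq_zero_iff]
      exact Nat.Prime.dvd_choose_self hpF.out (by omega) (by omega)
    have hcast : ((p.choose (n + 1) : ℕ) : ZMod p)
        = (((p - 1).choose n : ℕ) : ZMod p) + (((p - 1).choose (n + 1) : ℕ) : ZMod p) := by
      rw [hpas]; push_cast; ring
    rw [hdvd, ih hn] at hcast
    have this := hcast.symm
    have : (((p - 1).choose (n + 1) : ℕ) : ZMod p) = -(-1 : ZMod p) ^ n := by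
      linear_combination this
    rw [this]; ring

lemma coeff_one_sub_pow (k m : ℕ) :
    ((1 - Polynomial.X : Polynomial (ZMod p)) ^ k).coeff m
      = (-1 : ZMod p) ^ m * (k.choose m : ZMod p) := by
  have h1 : (1 - Polynomial.X : Polynomial (ZMod p))
      = -1 * (Polynomial.X + Polynomial.C (-1 : ZMod p)) := by
    rw [map_neg, map_one]; ring
  have h2 : ((-1 : Polynomial (ZMod p))) ^ k = Polynomial.C ((-1 : ZMod p) ^ k) := by
    rw [map_pow, map_neg, map_one]
  rw [h1, mul_pow, h2, Polynomial.coeff_C_mul, Polynomial.coeff_X_add_C_pow]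
  by_cases hmk : m ≤ k
  · have hexp : (-1 : ZMod p) ^ k * (-1 : ZMod p) ^ (k - m) = (-1 : ZMod p) ^ m := by
      rw [← pow_add, show k + (k - m) = m + 2 * (k - m) by omega, pow_add, pow_mul,
        neg_one_sq, one_pow, mul_one]
    rw [← mul_assoc, hexp]
  · rw [Nat.choose_eq_zero_of_lt (by omega)]
    simp

end PolyLemmas
section PolyIdent
variable (p : ℕ) [hpF : Fact p.Prime]

lemma Lpoly_comp (hp3 : 3 < p) : (Lpoly p).comp (1 - Polynomial.X) = Lpoly p := by
  have hcomp : (Lpoly p).comp (1 - Polynomial.X)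
      = ∑ k ∈ Icc 1 (p - 1), Polynomial.C (((k : ZMod p))⁻¹) * (1 - Polynomial.X) ^ k := by
    rw [Lpoly, finset_sum_comp]
    exact Finset.sum_congr rfl fun k _ => by
      rw [Polynomial.mul_comp, Polynomial.C_comp, Polynomial.pow_comp, Polynomial.X_comp]
  ext m
  rw [hcomp, Polynomial.finset_sum_coeff]
  simp only [Polynomial.coeff_C_mul, coeff_one_sub_pow]
  rw [Lpoly, coeff_sum_Icc]
  by_cases hm0 : m = 0
  · subst hm0
    rw [if_neg (by simp)]
    simpa using hD p hp3
  by_cases hmq : m ≤ p - 1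
  · have hmem : m ∈ Icc 1 (p - 1) := Finset.mem_Icc.mpr ⟨by omega, hmq⟩
    rw [if_pos hmem]
    have hmne : ((m : ZMod p)) ≠ 0 := cast_ne_zero_of_Icc p hmem
    have hstep1 : ∑ k ∈ Icc 1 (p - 1),
          ((k : ZMod p))⁻¹ * ((-1 : ZMod p) ^ m * ((k.choose m : ℕ) : ZMod p))
        = ∑ k ∈ Icc m (p - 1),
          ((k : ZMod p))⁻¹ * ((-1 : ZMod p) ^ m * ((k.choose m : ℕ) : ZMod p)) := by
    -- restrict
      symm
      apply Finset.sum_subset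
      · intro x hx; rw [Finset.mem_Icc] at *; constructor <;> omega
      · intro x hx hx'
        rw [Finset.mem_Icc] at hx hx'
        rw [Nat.choose_eq_zero_of_lt (by omega)]
        simp
    have hstep2 : ∀ k ∈ Icc m (p - 1),
        ((k : ZMod p))⁻¹ * ((-1 : ZMod p) ^ m * ((k.choose m : ℕ) : ZMod p))
        = (-1 : ZMod p) ^ m * (((m : ZMod p))⁻¹ * ((((k - 1).choose (m - 1) : ℕ)) : ZMod p)) := by
      intro k hk
      rw [Finset.mem_Icc] at hk
      have hnat : k * ((k - 1).choose (m - 1)) = k.choose m * m := by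
        have h := Nat.add_one_mul_choose_eq (k - 1) (m - 1)
        have e1 : k - 1 + 1 = k := by omega
        have e2 : m - 1 + 1 = m := by omega
        simpa [Nat.succ_eq_add_one, e1, e2] using h
      have hcast := congrArg (fun x : ℕ => ((x : ℕ) : ZMod p)) hnat
      push_cast at hcast
      have hkne : ((k : ZMod p)) ≠ 0 :=
        cast_ne_zero_of_Icc p (Finset.mem_Icc.mpr ⟨by omega, hk.2⟩)
      have hky : (((k.choose m : ℕ)) : ZMod p) / ((k : ZMod p))
          = ((((k - 1).choose (m - 1) : ℕ)) : ZMod p) / ((m : ZMod p)) := by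
        rw [div_eq_div_iff hkne hmne]
        linear_combination -hcast
      calc ((k : ZMod p))⁻¹ * ((-1 : ZMod p) ^ m * ((k.choose m : ℕ) : ZMod p))
          = (-1 : ZMod p) ^ m * (((k.choose m : ℕ) : ZMod p) / ((k : ZMod p))) := by ring
        _ = (-1 : ZMod p) ^ m * (((((k - 1).choose (m - 1) : ℕ)) : ZMod p) / ((m : ZMod p))) := by
            rw [hky]
        _ = (-1 : ZMod p) ^ m * (((m : ZMod p))⁻¹ * ((((k - 1).choose (m - 1) : ℕ)) : ZMod p)) := by
            ring
    rw [hstep1, Finset.sum_congr rfl hstep2, ← Finset.mul_sum, ← Finset.mul_sum]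
    have hstep3 : ∑ k ∈ Icc m (p - 1), ((((k - 1).choose (m - 1) : ℕ)) : ZMod p)
        = (((p - 1).choose m : ℕ) : ZMod p) := by
      have hnat : ∑ k ∈ Icc m (p - 1), ((k - 1).choose (m - 1)) = (p - 1).choose m := by
        have hre : ∑ k ∈ Icc m (p - 1), ((k - 1).choose (m - 1))
            = ∑ j ∈ Icc (m - 1) (p - 2), (j.choose (m - 1)) := by
          refine Finset.sum_nbij' (fun k => k - 1) (fun j => j + 1) ?_ ?_ ?_ ?_ ?_
          · intro a ha; rw [Finset.mem_Icc] at *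
            show m - 1 ≤ a - 1 ∧ a - 1 ≤ p - 2
            omega
          · intro a ha; rw [Finset.mem_Icc] at *
            show m ≤ a + 1 ∧ a + 1 ≤ p - 1
            omega
          · intro a ha; rw [Finset.mem_Icc] at ha
            show a - 1 + 1 = a
            omega
          · intro a ha; rw [Finset.mem_Icc] at ha
            show a + 1 - 1 = a
            omega
          · intro a _; rfl
        rw [hre, Nat.sum_Icc_choose]
        congr 1 <;> omega
      rw [← hnat, Nat.cast_sum]
    rw [hstep3, choose_cast p hp3 m hmq]
    have hsq : (-1 : ZMod p) ^ m * ((-1 : ZMod p) ^ m) = 1 := by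
      rw [← pow_add, show m + m = 2 * m by omega, pow_mul, neg_one_sq, one_pow]
    linear_combination (((m : ZMod p))⁻¹) * hsq
  · rw [if_neg (by rw [Finset.mem_Icc]; omega)]
    apply Finset.sum_eq_zero
    intro k hk
    rw [Finset.mem_Icc] at hk
    rw [Nat.choose_eq_zero_of_lt (by omega)]
    simp

lemma X_mul_deriv : Polynomial.X * Polynomial.derivative (Gpoly p) = hpoly p := by
  rw [Gpoly, map_sum, Finset.mul_sum, hpoly]
  apply Finset.sum_congr rfl
  intro k hk
  have hkmem := hk
  rw [Finset.mem_Icc] at hk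
  have hkne : ((k : ZMod p)) ≠ 0 := cast_ne_zero_of_Icc p hkmem
  rw [Polynomial.derivative_C_mul, Polynomial.derivative_X_pow]
  have hX : Polynomial.X * Polynomial.X ^ (k - 1) = (Polynomial.X : Polynomial (ZMod p)) ^ k := by
    rw [← pow_succ']
    congr 1
    omega
  have hC : Hb p k * ((k : ZMod p))⁻¹ * ((k : ℕ) : ZMod p) = Hb p k := by
    field_simp
  calc Polynomial.X * (Polynomial.C (Hb p k * ((k : ZMod p))⁻¹) *
        (Polynomial.C (((k : ℕ)) : ZMod p) * Polynomial.X ^ (k - 1)))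
      = Polynomial.C (Hb p k * ((k : ZMod p))⁻¹ * (((k : ℕ)) : ZMod p)) *
        (Polynomial.X * Polynomial.X ^ (k - 1)) := by
        simp only [Polynomial.C_mul]; ring
    _ = Polynomial.C (Hb p k) * Polynomial.X ^ k := by rw [hC, hX]

lemma Fzero (hp3 : 3 < p) : Gpoly p + (Gpoly p).comp (1 - Polynomial.X) = 0 := by
  set D1 := Polynomial.derivative (Gpoly p) with hD1def
  have h1 : (1 - Polynomial.X) * (Polynomial.X * D1) = Lpoly p := by
    rw [hD1def, X_mul_deriv p, one_sub_mul_hpoly p hp3]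
  have hcompX : (Polynomial.X * D1).comp (1 - Polynomial.X)
      = (1 - Polynomial.X) * D1.comp (1 - Polynomial.X) := by
    rw [Polynomial.mul_comp, Polynomial.X_comp]
  have h2 : Polynomial.X * ((1 - Polynomial.X) * D1.comp (1 - Polynomial.X)) = Lpoly p := by
    rw [← hcompX, hD1def, X_mul_deriv p]
    have hh : (Polynomial.X : Polynomial (ZMod p)) * (hpoly p).comp (1 - Polynomial.X)
        = ((1 - Polynomial.X) * hpoly p).comp (1 - Polynomial.X) := by
      rw [Polynomial.mul_comp, Polynomial.sub_comp, Polynomial.one_comp, Polynomial.X_comp]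
      ring
    rw [hh, one_sub_mul_hpoly p hp3, Lpoly_comp p hp3]
  have hder : Polynomial.derivative (Gpoly p + (Gpoly p).comp (1 - Polynomial.X))
      = D1 - D1.comp (1 - Polynomial.X) := by
    rw [map_add, Polynomial.derivative_comp_one_sub_X, hD1def]
    ring
  have hXF : (Polynomial.X * (1 - Polynomial.X)) * (D1 - D1.comp (1 - Polynomial.X)) = 0 := by
    linear_combination h1 - h2
  have hne : (Polynomial.X * (1 - Polynomial.X) : Polynomial (ZMod p)) ≠ 0 := by
    apply mul_ne_zero Polynomial.X_ne_zero
    intro h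
    have h' := congrArg (fun q => Polynomial.coeff q 1) h
    simp [Polynomial.coeff_one] at h'
  have hder0 : Polynomial.derivative (Gpoly p + (Gpoly p).comp (1 - Polynomial.X)) = 0 := by
    rw [hder]
    exact (mul_eq_zero.mp hXF).resolve_left hne
  have hdegG : (Gpoly p).natDegree ≤ p - 1 := by
    apply Polynomial.natDegree_sum_le_of_forall_le
    intro k hk
    refine le_trans (Polynomial.natDegree_C_mul_le _ _) ?_
    rw [Polynomial.natDegree_X_pow]
    exact (Finset.mem_Icc.mp hk).2
  have hdegC : ((Gpoly p).comp (1 - Polynomial.X)).natDegree ≤ p - 1 := by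
    refine le_trans Polynomial.natDegree_comp_le ?_
    have hd1 : (1 - Polynomial.X : Polynomial (ZMod p)).natDegree ≤ 1 := by
      refine le_trans (Polynomial.natDegree_sub_le _ _) ?_
      simp
    calc (Gpoly p).natDegree * (1 - Polynomial.X : Polynomial (ZMod p)).natDegree
        ≤ (p - 1) * 1 := Nat.mul_le_mul hdegG hd1
      _ = p - 1 := by omega
  have hdegF : (Gpoly p + (Gpoly p).comp (1 - Polynomial.X)).natDegree ≤ p - 1 :=
    le_trans (Polynomial.natDegree_add_le _ _) (max_le hdegG hdegC)
  ext m
  rw [Polynomial.coeff_zero]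
  match m with
  | 0 =>
    rw [Polynomial.coeff_add]
    have hg0 : (Gpoly p).coeff 0 = 0 := by rw [Gpoly, coeff_sum_Icc]; simp
    have hc0 : ((Gpoly p).comp (1 - Polynomial.X)).coeff 0 = (Gpoly p).eval 1 := by
      rw [Polynomial.coeff_zero_eq_eval_zero, Polynomial.eval_comp]
      simp
    have heval : (Gpoly p).eval 1 = ∑ k ∈ Icc 1 (p - 1), Hb p k * ((k : ZMod p))⁻¹ := by
      rw [Gpoly, Polynomial.eval_finset_sum]
      simp
    rw [hg0, hc0, heval, zero_add]
    rw [show ∑ k ∈ Icc 1 (p - 1), Hb p k * ((k : ZMod p))⁻¹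
        = ∑ k ∈ Icc 1 (p - 1), ((k : ZMod p))⁻¹ * Hb p k from
      Finset.sum_congr rfl fun k _ => mul_comm _ _]
    exact sum_H_div p hp3
  | m + 1 =>
    by_cases hm : m + 1 ≤ p - 1
    · have hcc := congrArg (fun q => Polynomial.coeff q m) hder0
      simp only [Polynomial.coeff_derivative, Polynomial.coeff_zero] at hcc
      have hne' : (((m + 1 : ℕ)) : ZMod p) ≠ 0 :=
        cast_ne_zero_of_Icc p (Finset.mem_Icc.mpr ⟨by omega, hm⟩)
      rcases mul_eq_zero.mp hcc with h | h
      · exact h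
      · exfalso; apply hne'; push_cast; exact h
    · exact Polynomial.coeff_eq_zero_of_natDegree_lt (lt_of_le_of_lt hdegF (by omega))

end PolyIdent
section MatrixPart
variable (p : ℕ) [hpF : Fact p.Prime]

lemma key_sum (hp3 : 3 < p) (t : ZMod p) (w : ℕ → ZMod p) (hw0 : w 0 = 2) (hw1 : w 1 = 1)
    (hwr : ∀ k, w (k + 2) = w (k + 1) - t * w k) :
    ∑ k ∈ Icc 1 (p - 1), Hb p k * ((k : ZMod p))⁻¹ * w k = 0 := by
  classical
  set M : Matrix (Fin 2) (Fin 2) (ZMod p) := !![0, -t; 1, 1] with hMdef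
  have hM : M * M = M - t • 1 := by
    ext i j
    fin_cases i <;> fin_cases j <;>
      simp [hMdef, Matrix.mul_apply, Fin.sum_univ_succ, Matrix.one_apply] <;> ring
  have htrM : M.trace = 1 := by simp [hMdef, Matrix.trace_fin_two]
  have hN : (1 - M) * (1 - M) = (1 - M) - t • 1 := by
    have hexp : (1 - M) * (1 - M) = 1 - M - M + M * M := by noncomm_ring
    rw [hexp, hM]
    abel
  have htrN : (1 - M).trace = 1 := by
    rw [Matrix.trace_sub, Matrix.trace_one, htrM]
    norm_num
  have main : ∀ N : Matrix (Fin 2) (Fin 2) (ZMod p), N * N = N - t • 1 → N.trace = 1 →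
      ∀ k, (N ^ k).trace = w k := by
    intro N hNN htr
    have step : ∀ k, (N ^ k).trace = w k ∧ (N ^ (k + 1)).trace = w (k + 1) := by
      intro k
      induction k with
      | zero =>
        constructor
        · rw [pow_zero, Matrix.trace_one, hw0]
          norm_num
        · rw [pow_one, htr, hw1]
      | succ n ih =>
        refine ⟨ih.2, ?_⟩
        have hpow : N ^ (n + 2) = N ^ (n + 1) - t • N ^ n := by
          have : N ^ (n + 2) = N ^ n * (N * N) := by
            rw [show n + 2 = n + 1 + 1 from rfl, pow_succ, pow_succ, mul_assoc]
          rw [this, hNN, mul_sub, mul_smul_comm, mul_one, ← pow_succ]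
        rw [show n + 1 + 1 = n + 2 from rfl, hpow, Matrix.trace_sub, Matrix.trace_smul,
          ih.1, ih.2, hwr n, smul_eq_mul]
    exact fun k => (step k).1
  have hFz := Fzero p hp3
  have happ := congrArg (fun q => ((Polynomial.aeval M) q).trace) hFz
  simp only [map_add, map_zero, Matrix.trace_add, Matrix.trace_zero] at happ
  rw [Polynomial.aeval_comp] at happ
  have h1M : (Polynomial.aeval M) ((1 : Polynomial (ZMod p)) - Polynomial.X) = 1 - M := by
    simp
  rw [h1M] at happ
  have htr : ∀ N : Matrix (Fin 2) (Fin 2) (ZMod p), (N * N = N - t • 1) → N.trace = 1 →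
      ((Polynomial.aeval N) (Gpoly p)).trace
        = ∑ k ∈ Icc 1 (p - 1), Hb p k * ((k : ZMod p))⁻¹ * w k := by
    intro N h1 h2
    rw [Gpoly, map_sum, Matrix.trace_sum]
    apply Finset.sum_congr rfl
    intro k _
    rw [map_mul, Polynomial.aeval_C, map_pow, Polynomial.aeval_X]
    rw [← Algebra.smul_def, Matrix.trace_smul, main N h1 h2 k, smul_eq_mul]
  rw [htr M hM htrM, htr _ hN htrN] at happ
  have h2' : (2 : ZMod p) * ∑ k ∈ Icc 1 (p - 1), Hb p k * ((k : ZMod p))⁻¹ * w k = 0 := by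
    linear_combination happ
  exact (mul_eq_zero.mp h2').resolve_left (zmodTwoNeZero p hp3)

end MatrixPart
section Glue

lemma int_cast_div_rat (a b : ℤ) (h : b ∣ a) (hb : b ≠ 0) :
    ((a / b : ℤ) : ℚ) = (a : ℚ) / (b : ℚ) := by
  obtain ⟨c, rfl⟩ := h
  rw [Int.mul_ediv_cancel_left _ hb]
  have hbq : (b : ℚ) ≠ 0 := Int.cast_ne_zero.mpr hb
  push_cast
  field_simp

lemma int_cast_div_zmod (p : ℕ) [Fact p.Prime] (a b : ℤ) (h : b ∣ a)
    (hb : ((b : ℤ) : ZMod p) ≠ 0) :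
    ((a / b : ℤ) : ZMod p) = ((a : ℤ) : ZMod p) * (((b : ℤ) : ZMod p))⁻¹ := by
  have hb0 : b ≠ 0 := by rintro rfl; simp at hb
  obtain ⟨c, rfl⟩ := h
  rw [Int.mul_ediv_cancel_left _ hb0]
  push_cast
  field_simp

theorem stmt0 (p : ℕ) (hp : p.Prime) (hp3 : 3 < p) (A B : ℤ) (hA : ¬ ((p : ℤ) ∣ A)) :
    ratCong p 1
      (∑ k ∈ Finset.Icc 1 (p - 1),
        (lucasV A B k : ℚ) * harmonic k / (k * (A : ℚ) ^ k)) 0 := by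
  haveI hpF : Fact p.Prime := ⟨hp⟩
  have hA0 : A ≠ 0 := by rintro rfl; exact hA (dvd_zero _)
  have hAQ : (A : ℚ) ≠ 0 := Int.cast_ne_zero.mpr hA0
  have hAK : ((A : ℤ) : ZMod p) ≠ 0 := fun h => hA ((ZMod.intCast_zmod_eq_zero_iff_dvd A p).mp h)
  set Fq : ℤ := ((p - 1).factorial : ℤ) with hFqdef
  have hFq0 : Fq ≠ 0 := Int.natCast_ne_zero.mpr (Nat.factorial_ne_zero _)
  have hFqQ : (Fq : ℚ) ≠ 0 := Int.cast_ne_zero.mpr hFq0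
  have hpndvdF : ¬ ((p : ℤ) ∣ Fq) := by
    rw [hFqdef, Int.natCast_dvd_natCast]
    intro hcon
    have := (Nat.Prime.dvd_factorial hp).mp hcon
    omega
  have hFqK : ((Fq : ℤ) : ZMod p) ≠ 0 := fun h =>
    hpndvdF ((ZMod.intCast_zmod_eq_zero_iff_dvd Fq p).mp h)
  have hdvdj : ∀ j, 1 ≤ j → j ≤ p - 1 → ((j : ℕ) : ℤ) ∣ Fq :=
    fun j h1 h2 => Int.natCast_dvd_natCast.mpr (Nat.dvd_factorial (by omega) h2)
  set S : ℚ := ∑ k ∈ Finset.Icc 1 (p - 1),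
      (lucasV A B k : ℚ) * harmonic k / (k * (A : ℚ) ^ k) with hSdef
  set N : ℤ := ∑ k ∈ Finset.Icc 1 (p - 1),
      lucasV A B k * ((∑ j ∈ Finset.Icc 1 k, Fq / (j : ℤ)) * (Fq / (k : ℤ) * A ^ (p - 1 - k)))
    with hNdef
  -- Claim A : (N : ℚ) = (A^(p-1) * Fq^2) * S
  have claimA : (N : ℚ) = ((A ^ (p - 1) * Fq ^ 2 : ℤ) : ℚ) * S := by
    rw [hSdef, Finset.mul_sum, hNdef]
    push_cast
    apply Finset.sum_congr rfl
    intro k hk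
    rw [Finset.mem_Icc] at hk
    have hkQ : ((k : ℕ) : ℚ) ≠ 0 := Nat.cast_ne_zero.mpr (by omega)
    have hsum : ∑ j ∈ Finset.Icc 1 k, ((Fq / (j : ℤ) : ℤ) : ℚ) = (Fq : ℚ) * harmonic k := by
      rw [harmonic_eq_sum_Icc, Finset.mul_sum]
      apply Finset.sum_congr rfl
      intro j hj
      rw [Finset.mem_Icc] at hj
      have hj0 : ((j : ℕ) : ℤ) ≠ 0 := Int.natCast_ne_zero.mpr (by omega)
      rw [int_cast_div_rat _ _ (hdvdj j hj.1 (by omega)) hj0]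
      push_cast
      rw [div_eq_mul_inv]
    have hdivk : ((Fq / (k : ℤ) : ℤ) : ℚ) = (Fq : ℚ) / ((k : ℕ) : ℚ) := by
      rw [int_cast_div_rat _ _ (hdvdj k hk.1 hk.2) (Int.natCast_ne_zero.mpr (by omega))]
      push_cast
      ring
    rw [hsum, hdivk]
    have hpowsplit : ((A : ℚ)) ^ (p - 1 - k) * ((A : ℚ)) ^ k = ((A : ℚ)) ^ (p - 1) := by
      rw [← pow_add]
      congr 1
      omega
    rw [← hpowsplit]
    field_simp
  -- Claim B : (N : ZMod p) = 0
  have claimB : ((N : ℤ) : ZMod p) = 0 := by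
    set u : ZMod p := (((A : ℤ) : ZMod p))⁻¹ with hudef
    have hu : ((A : ℤ) : ZMod p) * u = 1 := mul_inv_cancel₀ hAK
    have hkey := key_sum p hp3 (((B : ℤ) : ZMod p) * u ^ 2)
      (fun k => ((lucasV A B k : ℤ) : ZMod p) * u ^ k) ?_ ?_ ?_
    · rw [hNdef]
      push_cast
      have hterm : ∀ k ∈ Finset.Icc 1 (p - 1),
          ((lucasV A B k : ℤ) : ZMod p) *
            ((∑ j ∈ Finset.Icc 1 k, ((Fq / (j : ℤ) : ℤ) : ZMod p)) *
              (((Fq / (k : ℤ) : ℤ) : ZMod p) * (((A : ℤ) : ZMod p)) ^ (p - 1 - k)))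
          = ((Fq : ℤ) : ZMod p) ^ 2 * (((A : ℤ) : ZMod p)) ^ (p - 1) *
              (Hb p k * ((k : ZMod p))⁻¹ *
                (((lucasV A B k : ℤ) : ZMod p) * u ^ k)) := by
        intro k hk
        rw [Finset.mem_Icc] at hk
        have hsumz : ∑ j ∈ Finset.Icc 1 k, ((Fq / (j : ℤ) : ℤ) : ZMod p)
            = ((Fq : ℤ) : ZMod p) * Hb p k := by
          rw [Hb, Finset.mul_sum]
          apply Finset.sum_congr rfl
          intro j hj
          rw [Finset.mem_Icc] at hj
          have hjK : (((j : ℕ) : ℤ) : ZMod p) ≠ 0 := by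
            push_cast
            exact cast_ne_zero_of_Icc p (Finset.mem_Icc.mpr ⟨hj.1, by omega⟩)
          rw [int_cast_div_zmod p _ _ (hdvdj j hj.1 (by omega)) hjK]
          push_cast
          ring
        have hkK : (((k : ℕ) : ℤ) : ZMod p) ≠ 0 := by
          push_cast
          exact cast_ne_zero_of_Icc p (Finset.mem_Icc.mpr hk)
        have hdivkz : ((Fq / (k : ℤ) : ℤ) : ZMod p)
            = ((Fq : ℤ) : ZMod p) * ((k : ZMod p))⁻¹ := by
          rw [int_cast_div_zmod p _ _ (hdvdj k hk.1 hk.2) hkK]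
          push_cast
          ring
        rw [hsumz, hdivkz]
        have hAk : (((A : ℤ) : ZMod p)) ^ k * u ^ k = 1 := by
          rw [← mul_pow, hu, one_pow]
        have hsplitK : (((A : ℤ) : ZMod p)) ^ (p - 1 - k) * (((A : ℤ) : ZMod p)) ^ k
            = (((A : ℤ) : ZMod p)) ^ (p - 1) := by
          rw [← pow_add]
          congr 1
          omega
        linear_combination
          (-(((Fq : ℤ) : ZMod p) ^ 2 * Hb p k * ((k : ZMod p))⁻¹ *
              ((lucasV A B k : ℤ) : ZMod p) * (((A : ℤ) : ZMod p)) ^ (p - 1 - k))) * hAk +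
          (((Fq : ℤ) : ZMod p) ^ 2 * Hb p k * ((k : ZMod p))⁻¹ *
              ((lucasV A B k : ℤ) : ZMod p) * u ^ k) * hsplitK
      rw [Finset.sum_congr rfl hterm, ← Finset.mul_sum, hkey, mul_zero]
    · show ((lucasV A B 0 : ℤ) : ZMod p) * u ^ 0 = 2
      simp [lucasV]
    · show ((lucasV A B 1 : ℤ) : ZMod p) * u ^ 1 = 1
      simpa [lucasV] using hu
    · intro k
      show ((lucasV A B (k + 2) : ℤ) : ZMod p) * u ^ (k + 2)
          = ((lucasV A B (k + 1) : ℤ) : ZMod p) * u ^ (k + 1)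
            - (((B : ℤ) : ZMod p) * u ^ 2) * (((lucasV A B k : ℤ) : ZMod p) * u ^ k)
      have hrec : lucasV A B (k + 2) = A * lucasV A B (k + 1) - B * lucasV A B k := rfl
      rw [hrec]
      push_cast
      linear_combination (((lucasV A B (k + 1) : ℤ) : ZMod p) * u ^ (k + 1)) * hu
  -- conclusion
  obtain ⟨N', hN'⟩ := (ZMod.intCast_zmod_eq_zero_iff_dvd N p).mp claimB
  have hc0 : ((A ^ (p - 1) * Fq ^ 2 : ℤ) : ℚ) ≠ 0 := by
    push_cast
    exact mul_ne_zero (pow_ne_zero _ hAQ) (pow_ne_zero _ hFqQ)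
  refine ⟨(N' : ℚ) / ((A ^ (p - 1) * Fq ^ 2 : ℤ) : ℚ), ?_, ?_⟩
  · rw [sub_zero, pow_one]
    have hNQ : (N : ℚ) = (p : ℚ) * (N' : ℚ) := by exact_mod_cast congrArg (fun z : ℤ => (z : ℚ)) hN'
    rw [← mul_div_assoc, eq_div_iff hc0]
    linear_combination hNQ - claimA
  · intro hdvd
    have hreq : (N' : ℚ) / ((A ^ (p - 1) * Fq ^ 2 : ℤ) : ℚ)
        = Rat.divInt N' (A ^ (p - 1) * Fq ^ 2) := by
      rw [Rat.divInt_eq_div]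
    have hden : (((((N' : ℚ) / ((A ^ (p - 1) * Fq ^ 2 : ℤ) : ℚ)).den : ℕ) : ℤ))
        ∣ (A ^ (p - 1) * Fq ^ 2 : ℤ) := by
      rw [hreq]
      exact Rat.den_dvd _ _
    have hpZ : Prime ((p : ℕ) : ℤ) := Nat.prime_iff_prime_int.mp hp
    have hfin : ((p : ℕ) : ℤ) ∣ (A ^ (p - 1) * Fq ^ 2 : ℤ) :=
      dvd_trans (Int.natCast_dvd_natCast.mpr hdvd) hden
    rcases hpZ.dvd_mul.mp hfin with h | h
    · exact hA (hpZ.dvd_of_dvd_pow h)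
    · exact hpndvdF (hpZ.dvd_of_dvd_pow h)

end Glue
end

section
/- Let p > 3 be a prime and let A, B be integers with p ∤ B and with A² − 4B a nonzero quadratic residue modulo p (i.e., the Legendre symbol ((A²−4B)/p) = 1). Then for every natural number n, the rational number ∑_{k=0}^{p-1} (1 + B^{−k})·u_k(A,B)·H_k^n is congruent to 0 modulo p. -/
/-- `x` is `p`-integral with image `v` in `ZMod p`. -/
def Good (p : ℕ) [Fact p.Prime] (x : ℚ) (v : ZMod p) : Prop :=
  ¬ (p ∣ x.den) ∧ (x : ZMod p) = v

namespace Good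

variable {p : ℕ} [Fact p.Prime] {x y : ℚ} {v w : ZMod p}

lemma den_ne (h : Good p x v) : ((x.den : ZMod p)) ≠ 0 := by
  rw [Ne, ZMod.natCast_eq_zero_iff]
  exact h.1

lemma add (hx : Good p x v) (hy : Good p y w) : Good p (x + y) (v + w) := by
  constructor
  · intro hdvd
    rcases (Nat.Prime.dvd_mul (Fact.out)).mp (hdvd.trans (Rat.add_den_dvd x y)) with h | h
    exacts [hx.1 h, hy.1 h]
  · rw [Rat.cast_add_of_ne_zero hx.den_ne hy.den_ne, hx.2, hy.2]

lemma mul (hx : Good p x v) (hy : Good p y w) : Good p (x * y) (v * w) := by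
  constructor
  · intro hdvd
    rcases (Nat.Prime.dvd_mul (Fact.out)).mp (hdvd.trans (Rat.mul_den_dvd x y)) with h | h
    exacts [hx.1 h, hy.1 h]
  · rw [Rat.cast_mul_of_ne_zero hx.den_ne hy.den_ne, hx.2, hy.2]

lemma intCast (m : ℤ) : Good p (m : ℚ) (m : ZMod p) := by
  constructor
  · rw [Rat.den_intCast]
    intro h
    exact (Nat.Prime.one_lt (Fact.out : p.Prime)).ne' (Nat.dvd_one.mp h)
  · exact Rat.cast_intCast m

lemma one : Good p 1 1 := by simpa using intCast (p := p) 1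

lemma pow (hx : Good p x v) (n : ℕ) : Good p (x ^ n) (v ^ n) := by
  induction n with
  | zero => simpa using one
  | succ n ih => rw [pow_succ, pow_succ]; exact ih.mul hx

lemma inv_int {m : ℤ} (hm : (m : ZMod p) ≠ 0) : Good p ((m : ℚ))⁻¹ ((m : ZMod p))⁻¹ := by
  have hm0 : m ≠ 0 := by rintro rfl; simp at hm
  constructor
  · rw [Rat.inv_intCast_den, if_neg hm0]
    intro hdvd
    have : (p : ℤ) ∣ m := Int.dvd_natAbs.mp (Int.natCast_dvd_natCast.mpr hdvd)
    exact hm ((ZMod.intCast_zmod_eq_zero_iff_dvd m p).mpr this)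
  · have hnum : (((m : ℚ).num : ZMod p)) ≠ 0 := by
      rwa [Rat.num_intCast]
    rw [Rat.cast_inv_of_ne_zero hnum, Rat.cast_intCast]

lemma sum {ι : Type*} (s : Finset ι) (f : ι → ℚ) (g : ι → ZMod p)
    (h : ∀ i ∈ s, Good p (f i) (g i)) :
    Good p (∑ i ∈ s, f i) (∑ i ∈ s, g i) := by
  induction s using Finset.cons_induction with
  | empty => simpa using intCast (p := p) 0
  | cons a s ha ih =>
    rw [Finset.sum_cons, Finset.sum_cons]
    exact (h a (Finset.mem_cons_self a s)).add (ih fun i hi => h i (Finset.mem_cons_of_mem hi))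

end Good

section Core

variable (p : ℕ) [Fact p.Prime]

/-- Harmonic number in `ZMod p`. -/
def Hz (m : ℕ) : ZMod p := ∑ i ∈ Finset.range m, ((i : ZMod p) + 1)⁻¹

lemma good_harmonic {k : ℕ} (hk : k < p) : Good p (harmonic k) (Hz p k) := by
  unfold harmonic Hz
  apply Good.sum
  intro i hi
  have hi' : i < k := Finset.mem_range.mp hi
  have hne : (((i + 1 : ℕ) : ℤ) : ZMod p) ≠ 0 := by
    rw [Ne, ZMod.intCast_zmod_eq_zero_iff_dvd]
    intro h
    have h' : p ∣ i + 1 := Int.ofNat_dvd.mp h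
    have := Nat.le_of_dvd (Nat.succ_pos i) h'
    omega
  have hgood := Good.inv_int (p := p) hne
  have e1 : ((i + 1 : ℕ) : ℚ) = (((i + 1 : ℕ) : ℤ) : ℚ) := by push_cast; ring
  have e2 : (((((i + 1 : ℕ) : ℤ)) : ZMod p))⁻¹ = ((i : ZMod p) + 1)⁻¹ := by push_cast; ring
  rw [e1, ← e2]
  exact hgood

lemma sum_univ_zmod (h2 : (2 : ZMod p) ≠ 0) : ∑ x : ZMod p, x = 0 := by
  have hneg : ∑ x : ZMod p, x = ∑ x : ZMod p, -x :=
    Fintype.sum_equiv (Equiv.neg (ZMod p)) _ _ (fun x => (neg_neg x).symm)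
  have : (2 : ZMod p) * ∑ x : ZMod p, x = 0 := by
    rw [two_mul]
    nth_rewrite 2 [hneg]
    rw [← Finset.sum_add_distrib]
    simp
  rcases mul_eq_zero.mp this with h | h
  · exact absurd h h2
  · exact h

lemma sum_univ_inv_zmod (h2 : (2 : ZMod p) ≠ 0) : ∑ x : ZMod p, x⁻¹ = 0 := by
  have hswap : ∑ x : ZMod p, x⁻¹ = ∑ x : ZMod p, x := by
    apply Fintype.sum_bijective (fun x : ZMod p => x⁻¹)
    · exact Function.Involutive.bijective (fun x => inv_inv x)
    · intro x
      rfl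
  rw [hswap]
  exact sum_univ_zmod p h2

lemma Hz_last (h2 : (2 : ZMod p) ≠ 0) : Hz p (p - 1) = 0 := by
  have hp1 : p - 1 + 1 = p := Nat.succ_pred_eq_of_pos (Fact.out : p.Prime).pos
  have step : Hz p (p - 1) = ∑ i ∈ Finset.range p, ((i : ℕ) : ZMod p)⁻¹ := by
    calc Hz p (p - 1) = ∑ i ∈ Finset.range (p - 1), (((i + 1 : ℕ)) : ZMod p)⁻¹ := by
          unfold Hz
          apply Finset.sum_congr rfl
          intro i _
          push_cast
          ring_nf
      _ = ∑ i ∈ Finset.range (p - 1), (((i + 1 : ℕ)) : ZMod p)⁻¹ + ((0 : ℕ) : ZMod p)⁻¹ := by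
          simp
      _ = ∑ i ∈ Finset.range (p - 1 + 1), ((i : ℕ) : ZMod p)⁻¹ :=
          (Finset.sum_range_succ' (fun i => ((i : ℕ) : ZMod p)⁻¹) (p - 1)).symm
      _ = ∑ i ∈ Finset.range p, ((i : ℕ) : ZMod p)⁻¹ := by rw [hp1]
  rw [step]
  have : ∑ i ∈ Finset.range p, ((i : ℕ) : ZMod p)⁻¹ = ∑ x : ZMod p, x⁻¹ := by
    apply Finset.sum_nbij' (fun i => ((i : ℕ) : ZMod p)) (fun x => x.val)
    · intro a _; exact Finset.mem_univ _
    · intro x _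
      exact Finset.mem_range.mpr (ZMod.val_lt x)
    · intro a ha
      exact ZMod.val_cast_of_lt (Finset.mem_range.mp ha)
    · intro x _
      exact ZMod.natCast_rightInverse x
    · intro a _; rfl
  rw [this]
  exact sum_univ_inv_zmod p h2

lemma Hz_reflect (h2 : (2 : ZMod p) ≠ 0) : ∀ k, k ≤ p - 1 → Hz p (p - 1 - k) = Hz p k := by
  intro k
  induction k with
  | zero => intro _; simpa [Hz] using Hz_last p h2
  | succ k ih =>
    intro hk1
    have hk : k ≤ p - 1 := Nat.le_of_succ_le hk1
    have hsub : p - 1 - k = (p - 1 - (k + 1)) + 1 := by omega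
    have hIH := ih hk
    rw [hsub] at hIH
    rw [Hz, Finset.sum_range_succ, ← Hz] at hIH
    -- the extra term: ((p - 1 - (k+1) : ℕ) : ZMod p) + 1 = -(k+1)
    have hcast : ((p - 1 - (k + 1) : ℕ) : ZMod p) + 1 = -((k : ZMod p) + 1) := by
      have h1 : ((p - 1 - (k + 1) : ℕ) : ZMod p) = ((p - (k + 2) : ℕ) : ZMod p) := by
        congr 1
        omega
      rw [h1, Nat.cast_sub (by omega : k + 2 ≤ p)]
      push_cast
      rw [ZMod.natCast_self]
      ring
    rw [hcast, inv_neg] at hIH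
    have hthis : Hz p (p - 1 - (k + 1)) = Hz p k + ((k : ZMod p) + 1)⁻¹ := by
      rw [← hIH]; ring
    have hsucc : Hz p (k + 1) = Hz p k + ((k : ZMod p) + 1)⁻¹ :=
      Finset.sum_range_succ (fun i => ((i : ZMod p) + 1)⁻¹) k
    rw [hthis, hsucc]

lemma lucas_cast (A B : ℤ) (a b : ZMod p) (hs : a + b = (A : ZMod p))
    (hm : a * b = (B : ZMod p)) :
    ∀ k, (a - b) * ((lucasU A B k : ℤ) : ZMod p) = a ^ k - b ^ k := by
  have key : ∀ k, ((a - b) * ((lucasU A B k : ℤ) : ZMod p) = a ^ k - b ^ k) ∧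
      ((a - b) * ((lucasU A B (k + 1) : ℤ) : ZMod p) = a ^ (k + 1) - b ^ (k + 1)) := by
    intro k
    induction k with
    | zero => constructor <;> simp [lucasU]
    | succ k ih =>
      refine ⟨ih.2, ?_⟩
      have hrec : lucasU A B (k + 2) = A * lucasU A B (k + 1) - B * lucasU A B k := rfl
      rw [hrec]
      push_cast
      rw [← hs, ← hm]
      linear_combination (a + b) * ih.2 - (a * b) * ih.1
  exact fun k => (key k).1

lemma lucas_reflect (A B : ℤ) (a b : ZMod p) (hs : a + b = (A : ZMod p))
    (hm : a * b = (B : ZMod p)) (hab : a ≠ b)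
    (ha : a ^ (p - 1) = 1) (hb : b ^ (p - 1) = 1) {k : ℕ} (hk : k ≤ p - 1) :
    ((lucasU A B (p - 1 - k) : ℤ) : ZMod p) * (B : ZMod p) ^ k
      = -((lucasU A B k : ℤ) : ZMod p) := by
  apply mul_left_cancel₀ (sub_ne_zero.mpr hab)
  have key := lucas_cast p A B a b hs hm
  have h1 : a ^ (p - 1 - k) * a ^ k = 1 := by
    rw [← pow_add, Nat.sub_add_cancel hk, ha]
  have h2 : b ^ (p - 1 - k) * b ^ k = 1 := by
    rw [← pow_add, Nat.sub_add_cancel hk, hb]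
  rw [← hm]
  linear_combination ((a * b) ^ k) * key (p - 1 - k) + key k + b ^ k * h1 - a ^ k * h2

end Core

lemma ratCong_of_good {p : ℕ} [Fact p.Prime] {S : ℚ} (h : Good p S 0) : ratCong p 1 S 0 := by
  have hden := h.den_ne
  have hnum : ((S.num : ZMod p)) = 0 := by
    have hc := h.2
    rw [Rat.cast_def] at hc
    rcases div_eq_zero_iff.mp hc with h' | h'
    · exact h'
    · exact absurd h' hden
  obtain ⟨m, hm⟩ := (ZMod.intCast_zmod_eq_zero_iff_dvd _ p).mp hnum
  refine ⟨(m : ℚ) / (S.den : ℚ), ?_, ?_⟩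
  · have hden0 : ((S.den : ℚ)) ≠ 0 := Nat.cast_ne_zero.mpr S.den_nz
    rw [sub_zero, pow_one]
    conv_lhs => rw [← Rat.num_div_den S, hm]
    push_cast
    rw [mul_div_assoc]
  · intro hdvd
    apply h.1
    refine dvd_trans (dvd_trans hdvd ?_) (dvd_refl S.den)
    have h1 : ((m : ℚ) / (S.den : ℚ)).den ∣ (m : ℚ).den * ((S.den : ℚ))⁻¹.den := by
      rw [div_eq_mul_inv]
      exact Rat.mul_den_dvd _ _
    rw [Rat.den_intCast, Rat.inv_natCast_den, if_neg S.den_nz, one_mul] at h1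
    exact h1

theorem stmt5 (p : ℕ) [Fact p.Prime] (hp3 : 3 < p) (A B : ℤ) (hB : ¬ ((p : ℤ) ∣ B))
    (hD : legendreSym p (A ^ 2 - 4 * B) = 1) (n : ℕ) :
    ratCong p 1
      (∑ k ∈ Finset.range p,
        (1 + (B : ℚ) ^ (-(k : ℤ))) * (lucasU A B k : ℚ) * harmonic k ^ n) 0 := by
  -- basic facts
  have hpprime : p.Prime := Fact.out
  have h2 : (2 : ZMod p) ≠ 0 := by
    have : ¬ (p ∣ 2) := fun h => by have := Nat.le_of_dvd (by norm_num) h; omega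
    have h2' : ((2 : ℕ) : ZMod p) ≠ 0 := by
      rw [Ne, ZMod.natCast_eq_zero_iff]; exact this
    simpa using h2'
  have hB0 : ((B : ZMod p)) ≠ 0 := by
    rw [Ne, ZMod.intCast_zmod_eq_zero_iff_dvd]; exact hB
  -- roots a, b of x² - A x + B in ZMod p
  have hD0 : (((A ^ 2 - 4 * B : ℤ)) : ZMod p) ≠ 0 := by
    intro h
    rw [(legendreSym.eq_zero_iff p _).mpr h] at hD
    norm_num at hD
  obtain ⟨s, hs⟩ := (legendreSym.eq_one_iff p hD0).mp hD
  have hs' : (A : ZMod p) ^ 2 - 4 * (B : ZMod p) = s * s := by push_cast at hs; exact hs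
  have hs0 : s ≠ 0 := by
    intro h; rw [h, mul_zero] at hs; exact hD0 hs
  set a : ZMod p := ((A : ZMod p) + s) * 2⁻¹ with ha_def
  set b : ZMod p := ((A : ZMod p) - s) * 2⁻¹ with hb_def
  have hinv : (2 : ZMod p) * 2⁻¹ = 1 := mul_inv_cancel₀ h2
  have hsum : a + b = (A : ZMod p) := by
    rw [ha_def, hb_def]
    field_simp
    ring
  have hmul : a * b = (B : ZMod p) := by
    rw [ha_def, hb_def]
    field_simp
    first
    | linear_combination 2 * hs'
    | linear_combination -hs'
    | linear_combination hs'
    | linear_combination -2 * hs'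
  have hdiff : a - b = s := by
    rw [ha_def, hb_def]
    field_simp
    ring
  have hab : a ≠ b := by
    intro h
    apply hs0
    rw [← hdiff, h, sub_self]
  have ha0 : a ≠ 0 := fun h => hB0 (by rw [← hmul, h, zero_mul])
  have hb0 : b ≠ 0 := fun h => hB0 (by rw [← hmul, h, mul_zero])
  have haP : a ^ (p - 1) = 1 := ZMod.pow_card_sub_one_eq_one ha0
  have hbP : b ^ (p - 1) = 1 := ZMod.pow_card_sub_one_eq_one hb0
  have hBP : (B : ZMod p) ^ (p - 1) = 1 := ZMod.pow_card_sub_one_eq_one hB0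
  -- the reduced summand
  set g : ℕ → ZMod p := fun k =>
    (1 + ((B : ZMod p) ^ k)⁻¹) * ((lucasU A B k : ℤ) : ZMod p) * (Hz p k) ^ n with hg_def
  -- each rational term is Good with value g k
  have hgood : ∀ k ∈ Finset.range p,
      Good p ((1 + (B : ℚ) ^ (-(k : ℤ))) * (lucasU A B k : ℚ) * harmonic k ^ n) (g k) := by
    intro k hk
    have hkp : k < p := Finset.mem_range.mp hk
    have hBk : (((B ^ k : ℤ)) : ZMod p) ≠ 0 := by
      push_cast
      exact pow_ne_zero k hB0
    have e1 : (B : ℚ) ^ (-(k : ℤ)) = (((B ^ k : ℤ) : ℚ))⁻¹ := by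
      rw [zpow_neg, zpow_natCast]
      push_cast
      ring
    rw [e1]
    have hfirst : Good p (1 + (((B ^ k : ℤ) : ℚ))⁻¹) (1 + (((B ^ k : ℤ)) : ZMod p)⁻¹) :=
      Good.one.add (Good.inv_int hBk)
    have hfirst' : ((((B ^ k : ℤ)) : ZMod p))⁻¹ = ((B : ZMod p) ^ k)⁻¹ := by push_cast; ring
    rw [hfirst'] at hfirst
    exact (hfirst.mul (Good.intCast _)).mul ((good_harmonic p hkp).pow n)
  have hGood := Good.sum (Finset.range p) _ g hgood
  -- the ZMod sum vanishes
  have hpair : ∀ k < p, g (p - 1 - k) = -(g k) := by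
    intro k hkp
    have hk1 : k ≤ p - 1 := by omega
    have hHz := Hz_reflect p h2 k hk1
    have hU := lucas_reflect p A B a b hsum hmul hab haP hbP hk1
    have hBke : ((B : ZMod p) ^ (p - 1 - k))⁻¹ = (B : ZMod p) ^ k := by
      apply inv_eq_of_mul_eq_one_right
      rw [← pow_add, Nat.sub_add_cancel hk1, hBP]
    have hBkne : (B : ZMod p) ^ k ≠ 0 := pow_ne_zero k hB0
    have hUval : ((lucasU A B (p - 1 - k) : ℤ) : ZMod p)
        = -((lucasU A B k : ℤ) : ZMod p) * ((B : ZMod p) ^ k)⁻¹ := by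
      rw [eq_mul_inv_iff_mul_eq₀ hBkne]
      exact hU
    rw [hg_def]
    simp only []
    rw [hHz, hBke, hUval]
    have hc : (B : ZMod p) ^ k * ((B : ZMod p) ^ k)⁻¹ = 1 := mul_inv_cancel₀ hBkne
    linear_combination (-(((lucasU A B k : ℤ) : ZMod p)) * (Hz p k) ^ n) * hc
  have hSz : ∑ k ∈ Finset.range p, g k = 0 := by
    have hrefl : ∑ k ∈ Finset.range p, g (p - 1 - k) = ∑ k ∈ Finset.range p, g k :=
      Finset.sum_range_reflect g p
    have hdouble : (∑ k ∈ Finset.range p, g k) + (∑ k ∈ Finset.range p, g k) = 0 := by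
      nth_rewrite 1 [← hrefl]
      rw [← Finset.sum_add_distrib]
      apply Finset.sum_eq_zero
      intro k hk
      rw [hpair k (Finset.mem_range.mp hk)]
      ring
    have h2Sz : (2 : ZMod p) * (∑ k ∈ Finset.range p, g k) = 0 := by
      rw [two_mul]; exact hdouble
    rcases mul_eq_zero.mp h2Sz with h | h
    · exact absurd h h2
    · exact h
  rw [hSz] at hGood
  exact ratCong_of_good hGood
end

section
/- For any prime p > 3, ∑_{k=0}^{p-1} χ(k)·H_k ≡ ((p/3) − 1)/4 · q_p(3) (mod p) as rational numbers, where χ(k) is the Jacobi symbol (k/3), (p/3) is the Jacobi symbol of p modulo 3, and q_p(3) = (3^{p−1} − 1)/p is the Fermat quotient of p to base 3. -/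
open Finset

private def chiZ (k : ℕ) : ℤ := jacobiSym k 3

private lemma chiZ_eq (k : ℕ) :
    chiZ k = if k % 3 = 0 then 0 else if k % 3 = 1 then 1 else -1 := by
  unfold chiZ
  rw [jacobiSym.mod_left]
  have h1 : ((k : ℤ) % (3:ℕ)) = ((k % 3 : ℕ) : ℤ) := by push_cast; omega
  rw [h1]
  have h2 : k % 3 < 3 := Nat.mod_lt _ (by norm_num)
  interval_cases h : k % 3 <;> norm_num

private lemma chiZ_sum (n : ℕ) :
    ∑ k ∈ range n, chiZ k = if n % 3 = 2 then 1 else 0 := by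
  induction n with
  | zero => simp
  | succ n ih =>
    rw [Finset.sum_range_succ, ih, chiZ_eq]
    have h2 : n % 3 < 3 := Nat.mod_lt _ (by norm_num)
    have h3 : (n+1) % 3 = (n % 3 + 1) % 3 := by omega
    interval_cases h : n % 3 <;> simp [h3]

private lemma sum_reflect (p : ℕ) [Fact p.Prime] (s t : Finset ℕ)
    (hst : ∀ j ∈ s, 0 < j ∧ j < p ∧ p - j ∈ t)
    (hts : ∀ j ∈ t, 0 < j ∧ j < p ∧ p - j ∈ s) :
    ∑ j ∈ s, ((j : ℕ) : ZMod p)⁻¹ = - ∑ j ∈ t, ((j : ℕ) : ZMod p)⁻¹ := by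
  rw [← Finset.sum_neg_distrib]
  refine Finset.sum_nbij' (fun j => p - j) (fun j => p - j) ?_ ?_ ?_ ?_ ?_
  · intro a ha; exact (hst a ha).2.2
  · intro a ha; exact (hts a ha).2.2
  · intro a ha; have := hst a ha; show p - (p - a) = a; omega
  · intro a ha; have := hts a ha; show p - (p - a) = a; omega
  · intro a ha
    have h1 := hst a ha
    have hcast : ((p - a : ℕ) : ZMod p) = -((a : ℕ) : ZMod p) := by
      rw [Nat.cast_sub (le_of_lt h1.2.1), ZMod.natCast_self, zero_sub]
    rw [hcast, inv_neg, neg_neg]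

private lemma sum_reflect_zero (p : ℕ) (hp : p.Prime) (hp2 : 2 < p) (s : Finset ℕ)
    (hs : ∀ j ∈ s, 0 < j ∧ j < p ∧ p - j ∈ s) :
    ∑ j ∈ s, ((j : ℕ) : ZMod p)⁻¹ = 0 := by
  haveI : Fact p.Prime := ⟨hp⟩
  have h := sum_reflect p s s hs hs
  have h2 : (2 : ZMod p) ≠ 0 := by
    have h4 : ((2 : ℕ) : ZMod p) ≠ 0 := by
      rw [Ne, ZMod.natCast_eq_zero_iff]
      intro hd; have := Nat.le_of_dvd (by norm_num) hd; omega
    simpa using h4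
  have h0 : (2 : ZMod p) * ∑ j ∈ s, ((j : ℕ) : ZMod p)⁻¹ = 0 := by
    rw [two_mul]; nth_rewrite 2 [h]; ring
  rcases mul_eq_zero.mp h0 with h' | h'
  · exact absurd h' h2
  · exact h'


private lemma prod_add_eps {R : Type*} [CommRing R] (π : R) (hπ : π * π = 0)
    (s : Finset ℕ) (r b : ℕ → R) :
    ∏ j ∈ s, (r j + π * b j)
      = ∏ j ∈ s, r j + π * ∑ j ∈ s, b j * ∏ i ∈ s.erase j, r i := by
  induction s using Finset.induction_on with
  | empty => simp
  | insert a s ha ih =>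
    rw [Finset.prod_insert ha, ih, Finset.prod_insert ha, Finset.sum_insert ha,
      Finset.erase_insert ha]
    have herase : ∑ j ∈ s, b j * ∏ i ∈ (insert a s).erase j, r i
        = ∑ j ∈ s, b j * (r a * ∏ i ∈ s.erase j, r i) := by
      refine Finset.sum_congr rfl fun j hj => ?_
      have hne : a ≠ j := by rintro rfl; exact ha hj
      rw [Finset.erase_insert_of_ne hne,
        Finset.prod_insert (fun hc => ha (Finset.mem_of_mem_erase hc))]
    rw [herase]
    have hsum : ∑ j ∈ s, b j * (r a * ∏ i ∈ s.erase j, r i)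
        = r a * ∑ j ∈ s, b j * ∏ i ∈ s.erase j, r i := by
      rw [Finset.mul_sum]; exact Finset.sum_congr rfl fun j hj => by ring
    rw [hsum]
    linear_combination (b a * ∑ j ∈ s, b j * ∏ i ∈ s.erase j, r i) * hπ

private lemma fermat3 (p : ℕ) (hp : p.Prime) (hp3 : 3 < p) :
    3 ^ (p - 1) = 1 + p * ((3 ^ (p - 1) - 1) / p) := by
  haveI : Fact p.Prime := ⟨hp⟩
  have h3 : (3 : ZMod p) ≠ 0 := by
    have : ((3 : ℕ) : ZMod p) ≠ 0 := by
      rw [Ne, ZMod.natCast_eq_zero_iff]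
      intro hd; have := Nat.le_of_dvd (by norm_num) hd; omega
    simpa using this
  have hpow := ZMod.pow_card_sub_one_eq_one h3
  have hone : 1 ≤ 3 ^ (p - 1) := Nat.one_le_pow _ _ (by norm_num)
  have hdvd : p ∣ 3 ^ (p - 1) - 1 := by
    rw [← ZMod.natCast_eq_zero_iff]
    rw [Nat.cast_sub hone]
    push_cast
    rw [hpow]; ring
  rw [Nat.mul_div_cancel' hdvd]
  omega

private lemma lemQ (p : ℕ) (hp : p.Prime) (hp3 : 3 < p) :
    (((3 ^ (p - 1) - 1) / p : ℕ) : ZMod p)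
      = ∑ j ∈ Finset.Ico 1 p, ((3 * j / p : ℕ) : ZMod p) * ((3 * j : ℕ) : ZMod p)⁻¹ := by
  haveI : Fact p.Prime := ⟨hp⟩
  haveI : NeZero (p ^ 2) := ⟨pow_ne_zero 2 hp.ne_zero⟩
  set q : ℕ := (3 ^ (p - 1) - 1) / p with hqdef
  set E : Finset ℕ := Finset.Ico 1 p with hE
  -- basic facts about elements of E
  have hjfacts : ∀ j ∈ E, ¬ p ∣ 3 * j ∧ 0 < 3 * j % p ∧ 3 * j % p < p := by
    intro j hj
    rw [hE, Finset.mem_Ico] at hj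
    have hnd : ¬ p ∣ 3 * j := by
      intro hd
      rcases (Nat.Prime.dvd_mul hp).mp hd with h | h
      · have := Nat.le_of_dvd (by norm_num) h; omega
      · have := Nat.le_of_dvd (by omega) h; omega
    exact ⟨hnd, Nat.pos_of_ne_zero fun h0 =>
      hnd (Nat.dvd_iff_mod_eq_zero.mpr h0), Nat.mod_lt _ (by omega)⟩
  have hrcop : ∀ j ∈ E, Nat.Coprime (3 * j % p) (p ^ 2) := by
    intro j hj
    have h := hjfacts j hj
    have : ¬ p ∣ 3 * j % p := fun hd => by
      have := Nat.le_of_dvd h.2.1 hd; omega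
    exact (Nat.Coprime.pow_right 2 (((Nat.Prime.coprime_iff_not_dvd hp).mpr this).symm))
  -- work in R = ZMod (p^2)
  have hpi : ((p : ZMod (p ^ 2)) * (p : ZMod (p ^ 2))) = 0 := by
    rw [← Nat.cast_mul, ← pow_two, ZMod.natCast_self]
  -- decomposition of each factor
  have hdec : ∀ j ∈ E, ((3 * j : ℕ) : ZMod (p ^ 2))
      = ((3 * j % p : ℕ) : ZMod (p ^ 2)) + (p : ZMod (p ^ 2)) * ((3 * j / p : ℕ) : ZMod (p ^ 2)) := by
    intro j hj
    conv_lhs => rw [(Nat.mod_add_div (3 * j) p).symm]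
    push_cast; ring
  -- injectivity of j ↦ 3*j % p on E
  have h3p : (3 : ZMod p) ≠ 0 := by
    have h4 : ((3 : ℕ) : ZMod p) ≠ 0 := by
      rw [Ne, ZMod.natCast_eq_zero_iff]
      intro hd; have := Nat.le_of_dvd (by norm_num) hd; omega
    simpa using h4
  have hinj : ∀ x ∈ E, ∀ y ∈ E, 3 * x % p = 3 * y % p → x = y := by
    intro x hx y hy hxy
    rw [hE, Finset.mem_Ico] at hx hy
    have hc : ((3 * x : ℕ) : ZMod p) = ((3 * y : ℕ) : ZMod p) := by
      rw [← ZMod.natCast_mod (3*x) p, ← ZMod.natCast_mod (3*y) p, hxy]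
    push_cast at hc
    have hxy2 := mul_left_cancel₀ h3p hc
    have hx' : ((x:ℕ):ZMod p).val = x := ZMod.val_cast_of_lt hx.2
    have hy' : ((y:ℕ):ZMod p).val = y := ZMod.val_cast_of_lt hy.2
    rw [← hx', ← hy', hxy2]
  have himg : E.image (fun j => 3 * j % p) = E := by
    apply Finset.eq_of_subset_of_card_le
    · intro x hx
      rcases Finset.mem_image.mp hx with ⟨j, hj, rfl⟩
      have := hjfacts j hj
      rw [hE, Finset.mem_Ico]
      exact ⟨this.2.1, this.2.2⟩
    · rw [Finset.card_image_of_injOn fun x hx y hy h => hinj x hx y hy h]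
  have hprod_r : ∏ j ∈ E, ((3 * j % p : ℕ) : ZMod (p^2)) = ∏ j ∈ E, ((j : ℕ) : ZMod (p^2)) := by
    conv_rhs => rw [← himg]
    rw [Finset.prod_image hinj]
  have hrunit : ∀ j ∈ E, ((3*j % p : ℕ) : ZMod (p^2)) * ((3*j % p : ℕ) : ZMod (p^2))⁻¹ = 1 :=
    fun j hj => ZMod.coe_mul_inv_eq_one _ (hrcop j hj)
  have heraseprod : ∀ j ∈ E, ∏ i ∈ E.erase j, ((3*i % p : ℕ) : ZMod (p^2))
      = (∏ i ∈ E, ((i:ℕ):ZMod (p^2))) * ((3*j % p : ℕ) : ZMod (p^2))⁻¹ := by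
    intro j hj
    have h1 : (∏ i ∈ E.erase j, ((3*i%p:ℕ):ZMod (p^2))) * ((3*j%p:ℕ):ZMod (p^2))
        = ∏ i ∈ E, ((3*i%p:ℕ):ZMod (p^2)) := Finset.prod_erase_mul E _ hj
    calc ∏ i ∈ E.erase j, ((3*i%p:ℕ):ZMod (p^2))
        = (∏ i ∈ E.erase j, ((3*i%p:ℕ):ZMod (p^2)))
            * (((3*j%p:ℕ):ZMod (p^2)) * ((3*j%p:ℕ):ZMod (p^2))⁻¹) := by
          rw [hrunit j hj, mul_one]
      _ = (∏ i ∈ E, ((3*i%p:ℕ):ZMod (p^2))) * ((3*j%p:ℕ):ZMod (p^2))⁻¹ := by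
          rw [← mul_assoc, h1]
      _ = (∏ i ∈ E, ((i:ℕ):ZMod (p^2))) * ((3*j%p:ℕ):ZMod (p^2))⁻¹ := by rw [hprod_r]
  have hmain : ∏ j ∈ E, ((3*j : ℕ) : ZMod (p^2))
      = ∏ j ∈ E, (((3*j % p :ℕ):ZMod (p^2)) + (p:ZMod (p^2)) * ((3*j/p :ℕ):ZMod (p^2))) :=
    Finset.prod_congr rfl hdec
  rw [prod_add_eps (p:ZMod (p^2)) hpi E _ _] at hmain
  have hF : ∏ j ∈ E, ((3*j:ℕ):ZMod (p^2)) = (3:ZMod (p^2))^(p-1) * ∏ j ∈ E, ((j:ℕ):ZMod (p^2)) := by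
    have hc : ∀ j ∈ E, ((3*j:ℕ):ZMod (p^2)) = (3:ZMod (p^2)) * ((j:ℕ):ZMod (p^2)) := by
      intro j hj; push_cast; ring
    rw [Finset.prod_congr rfl hc, Finset.prod_mul_distrib, Finset.prod_const, hE, Nat.card_Ico]
  have hFfact : ∏ j ∈ E, ((j:ℕ):ZMod (p^2)) = (((p-1).factorial : ℕ) : ZMod (p^2)) := by
    rw [← Nat.cast_prod]
    congr 1
    have h5 := Finset.prod_Ico_id_eq_factorial (p-1)
    rw [show p - 1 + 1 = p by omega] at h5
    rw [hE]; exact h5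
  have hFcop : Nat.Coprime (p-1).factorial (p^2) := by
    refine Nat.Coprime.pow_right 2 ?_
    have h6 : ¬ p ∣ (p-1).factorial := by
      rw [Nat.Prime.dvd_factorial hp]; omega
    exact ((Nat.Prime.coprime_iff_not_dvd hp).mpr h6).symm
  have hFunit : (((p-1).factorial : ℕ) : ZMod (p^2)) * (((p-1).factorial : ℕ) : ZMod (p^2))⁻¹ = 1 :=
    ZMod.coe_mul_inv_eq_one _ hFcop
  set Fc : ZMod (p^2) := (((p-1).factorial : ℕ) : ZMod (p^2)) with hFc
  set Sig : ZMod (p^2) := ∑ j ∈ E, ((3*j/p:ℕ):ZMod (p^2)) * ((3*j%p:ℕ):ZMod (p^2))⁻¹ with hSigdef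
  have hSig : ∑ j ∈ E, ((3*j/p :ℕ):ZMod (p^2)) * ∏ i ∈ E.erase j, ((3*i%p:ℕ):ZMod (p^2))
      = Fc * Sig := by
    rw [hSigdef, Finset.mul_sum]
    refine Finset.sum_congr rfl fun j hj => ?_
    rw [heraseprod j hj, hFfact]; ring
  rw [hF, hFfact, hprod_r, hFfact, hSig] at hmain
  -- hmain : (3:R)^(p-1) * Fc = Fc + p * (Fc * Sig)
  have hq3 : (3:ZMod (p^2))^(p-1) = 1 + (p:ZMod (p^2)) * (q:ℕ) := by
    have h7 := fermat3 p hp hp3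
    calc (3:ZMod (p^2))^(p-1) = ((3^(p-1) : ℕ) : ZMod (p^2)) := by push_cast; ring
      _ = ((1 + p * q : ℕ) : ZMod (p^2)) := by rw [hqdef, ← h7]
      _ = 1 + (p:ZMod (p^2)) * (q:ℕ) := by push_cast; ring
  rw [hq3] at hmain
  have hstep : ((p:ZMod (p^2)) * (q:ℕ)) * Fc = ((p:ZMod (p^2)) * Sig) * Fc := by
    linear_combination hmain
  have heq2 : (p:ZMod (p^2)) * (q:ℕ) = (p:ZMod (p^2)) * Sig := by
    calc (p:ZMod (p^2)) * (q:ℕ) = ((p:ZMod (p^2)) * (q:ℕ)) * (Fc * Fc⁻¹) := by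
          rw [hFunit, mul_one]
      _ = (((p:ZMod (p^2)) * (q:ℕ)) * Fc) * Fc⁻¹ := by ring
      _ = (((p:ZMod (p^2)) * Sig) * Fc) * Fc⁻¹ := by rw [hstep]
      _ = ((p:ZMod (p^2)) * Sig) * (Fc * Fc⁻¹) := by ring
      _ = (p:ZMod (p^2)) * Sig := by rw [hFunit, mul_one]
  -- transfer to ZMod p
  have hpd : p ∣ p^2 := dvd_pow_self p two_ne_zero
  set φ : ZMod (p^2) →+* ZMod p := ZMod.castHom hpd (ZMod p) with hphi
  have hker : ∀ x : ZMod (p^2), (p:ZMod (p^2)) * x = 0 → φ x = 0 := by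
    intro x hx
    have hxv : ((x.val : ℕ) : ZMod (p^2)) = x := ZMod.natCast_rightInverse x
    have h1 : ((p * x.val : ℕ) : ZMod (p^2)) = 0 := by rw [Nat.cast_mul, hxv]; exact hx
    rw [ZMod.natCast_eq_zero_iff] at h1
    have h2 : p ∣ x.val := by
      refine (Nat.mul_dvd_mul_iff_left hp.pos).mp ?_
      rw [← pow_two]; exact h1
    have h3 : φ x = ((x.val : ℕ) : ZMod p) := by
      conv_lhs => rw [← hxv]
      rw [map_natCast]
    rw [h3, ZMod.natCast_eq_zero_iff]; exact h2
  have hk := hker ((q:ℕ) - Sig) (by rw [mul_sub, heq2]; ring)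
  have hfin : ((q:ℕ) : ZMod p) = φ Sig := by
    have h8 : φ ((q:ℕ)) - φ Sig = 0 := by rw [← map_sub]; exact hk
    have h9 : φ (((q:ℕ)):ZMod (p^2)) = ((q:ℕ):ZMod p) := map_natCast φ q
    rw [h9] at h8
    have := sub_eq_zero.mp h8
    exact this
  rw [hfin, hSigdef, map_sum]
  refine Finset.sum_congr rfl fun j hj => ?_
  rw [map_mul, map_natCast]
  congr 1
  have ha : φ (((3*j%p :ℕ):ZMod (p^2))) = ((3*j % p : ℕ) : ZMod p) := map_natCast φ _
  have hb : ((3*j%p : ℕ) : ZMod p) = ((3*j : ℕ) : ZMod p) := ZMod.natCast_mod _ _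
  have honeq : ((3*j :ℕ) : ZMod p) * φ (((3*j%p:ℕ):ZMod (p^2))⁻¹) = 1 := by
    rw [← hb, ← ha, ← map_mul, hrunit j hj, map_one]
  exact (inv_eq_of_mul_eq_one_right honeq).symm

private lemma swap_sum {R : Type*} [CommRing R] (n : ℕ) (a g : ℕ → R) :
    ∑ k ∈ range n, a k * ∑ i ∈ range k, g i
      = ∑ i ∈ range n, g i * ∑ k ∈ Ico (i+1) n, a k := by
  have e1 : ∀ k ∈ range n, a k * ∑ i ∈ range k, g i
      = ∑ i ∈ range n, if i < k then a k * g i else 0 := by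
    intro k hk
    rw [← Finset.sum_filter]
    have h : (range n).filter (· < k) = range k := by
      ext x; simp only [mem_filter, mem_range]
      rw [mem_range] at hk; omega
    rw [h, Finset.mul_sum]
  rw [Finset.sum_congr rfl e1, Finset.sum_comm]
  refine Finset.sum_congr rfl fun i hi => ?_
  rw [← Finset.sum_filter]
  have h : (range n).filter (fun k => i < k) = Ico (i+1) n := by
    ext x; simp only [mem_filter, mem_range, mem_Ico]; omega
  rw [h, ← Finset.sum_mul]
  ring



private lemma star (p : ℕ) (hp : p.Prime) (hp3 : 3 < p) :
    4 * ∑ k ∈ range p, ((chiZ k : ℤ) : ZMod p) * ∑ i ∈ range k, ((i+1 : ℕ) : ZMod p)⁻¹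
      = (((chiZ p : ℤ) : ZMod p) - 1) * (((3^(p-1) - 1)/p : ℕ) : ZMod p) := by
  haveI : Fact p.Prime := ⟨hp⟩
  rw [swap_sum p (fun k => ((chiZ k : ℤ) : ZMod p)) (fun i => ((i+1 : ℕ) : ZMod p)⁻¹)]
  have hinner : ∀ i ∈ range p, ∑ k ∈ Ico (i+1) p, ((chiZ k : ℤ) : ZMod p)
      = (if p % 3 = 2 then (1:ZMod p) else 0) - (if (i+1) % 3 = 2 then (1:ZMod p) else 0) := by
    intro i hi
    rw [mem_range] at hi
    have h1 : ∑ k ∈ Ico (i+1) p, chiZ k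
        = (∑ k ∈ range p, chiZ k) - ∑ k ∈ range (i+1), chiZ k :=
      Finset.sum_Ico_eq_sub _ (by omega)
    have h2 : ∑ k ∈ Ico (i+1) p, ((chiZ k : ℤ) : ZMod p)
        = ((∑ k ∈ Ico (i+1) p, chiZ k : ℤ) : ZMod p) := by push_cast; rfl
    rw [h2, h1, chiZ_sum, chiZ_sum]
    split_ifs <;> push_cast <;> ring
  rw [Finset.sum_congr rfl fun i hi => by rw [hinner i hi]]
  have hexp : ∑ i ∈ range p, ((i+1:ℕ):ZMod p)⁻¹ *
        ((if p % 3 = 2 then (1:ZMod p) else 0) - (if (i+1) % 3 = 2 then (1:ZMod p) else 0))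
      = (if p % 3 = 2 then (1:ZMod p) else 0) * (∑ i ∈ range p, ((i+1:ℕ):ZMod p)⁻¹)
        - ∑ i ∈ range p, (if (i+1) % 3 = 2 then ((i+1:ℕ):ZMod p)⁻¹ else 0) := by
    rw [Finset.mul_sum, ← Finset.sum_sub_distrib]
    refine Finset.sum_congr rfl fun i hi => ?_
    split_ifs <;> ring
  rw [hexp]
  have hshift : ∀ f : ℕ → ZMod p, ∑ i ∈ range p, f (i+1) = ∑ j ∈ Ico 1 (p+1), f j := by
    intro f
    rw [Finset.sum_Ico_eq_sum_range]
    simp only [Nat.add_sub_cancel]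
    exact Finset.sum_congr rfl fun i _ => by rw [add_comm]
  have hW : ∑ i ∈ range p, ((i+1:ℕ):ZMod p)⁻¹ = 0 := by
    rw [hshift (fun j => ((j:ℕ):ZMod p)⁻¹)]
    rw [Finset.sum_Ico_succ_top (by omega : 1 ≤ p), ZMod.natCast_self, inv_zero, add_zero]
    refine sum_reflect_zero p hp (by omega) _ ?_
    intro j hj; rw [mem_Ico] at hj
    refine ⟨by omega, by omega, ?_⟩
    rw [mem_Ico]; omega
  have hS2eq : ∑ i ∈ range p, (if (i+1) % 3 = 2 then ((i+1:ℕ):ZMod p)⁻¹ else 0)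
      = ∑ j ∈ (Ico 1 p).filter (fun j => j % 3 = 2), ((j:ℕ):ZMod p)⁻¹ := by
    rw [hshift (fun j => if j % 3 = 2 then ((j:ℕ):ZMod p)⁻¹ else 0)]
    rw [Finset.sum_Ico_succ_top (by omega : 1 ≤ p), Finset.sum_filter]
    have h0 : (if p % 3 = 2 then ((p:ℕ):ZMod p)⁻¹ else 0) = 0 := by
      rw [ZMod.natCast_self, inv_zero]; split_ifs <;> rfl
    rw [h0, add_zero]
  rw [hW, hS2eq, mul_zero, zero_sub]
  have hpm : p % 3 = 1 ∨ p % 3 = 2 := by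
    have h30 : ¬ (3 ∣ p) := by
      intro hd
      have := (Nat.prime_dvd_prime_iff_eq (by norm_num) hp).mp hd
      omega
    omega
  rcases hpm with hpm | hpm
  · have hchi : chiZ p = 1 := by rw [chiZ_eq, hpm]; norm_num
    rw [hchi]
    have hS2 : ∑ j ∈ (Ico 1 p).filter (fun j => j % 3 = 2), ((j:ℕ):ZMod p)⁻¹ = 0 := by
      refine sum_reflect_zero p hp (by omega) _ ?_
      intro j hj
      rw [mem_filter, mem_Ico] at hj
      refine ⟨by omega, by omega, ?_⟩
      rw [mem_filter, mem_Ico]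
      omega
    rw [hS2]
    push_cast
    ring
  · have hchi : chiZ p = -1 := by rw [chiZ_eq, hpm]; norm_num
    rw [hchi]
    set m := p / 3 with hm
    have hpm2 : p = 3 * m + 2 := by omega
    have hm1 : 1 ≤ m := by omega
    have h1 : ∑ j ∈ (Ico 1 p).filter (fun j => j % 3 = 2), ((j:ℕ):ZMod p)⁻¹
        = - ∑ j ∈ (Ico 1 p).filter (fun j => j % 3 = 0), ((j:ℕ):ZMod p)⁻¹ := by
      refine sum_reflect p _ _ ?_ ?_ <;>
        · intro j hj; rw [mem_filter, mem_Ico] at hj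
          refine ⟨by omega, by omega, ?_⟩; rw [mem_filter, mem_Ico]; omega
    have h2 : ∑ j ∈ (Ico 1 p).filter (fun j => j % 3 = 0), ((j:ℕ):ZMod p)⁻¹
        = ∑ u ∈ Ico 1 (m+1), ((3*u : ℕ):ZMod p)⁻¹ := by
      refine Finset.sum_nbij' (fun j => j / 3) (fun u => 3*u) ?_ ?_ ?_ ?_ ?_
      · intro j hj
        rw [mem_filter, mem_Ico] at hj
        show j / 3 ∈ Ico 1 (m+1)
        rw [mem_Ico]; omega
      · intro u hu; rw [mem_Ico] at hu
        show 3 * u ∈ (Ico 1 p).filter (fun j => j % 3 = 0)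
        rw [mem_filter, mem_Ico]; omega
      · intro j hj; rw [mem_filter, mem_Ico] at hj; show 3 * (j / 3) = j; omega
      · intro u hu; rw [mem_Ico] at hu; show 3 * u / 3 = u; omega
      · intro j hj; rw [mem_filter, mem_Ico] at hj
        have h6 : 3 * (j / 3) = j := by omega
        show ((j:ℕ):ZMod p)⁻¹ = ((3 * (j/3) : ℕ):ZMod p)⁻¹
        rw [h6]
    have h3 : ∀ u : ℕ, ((3*u : ℕ) : ZMod p)⁻¹ = (3 : ZMod p)⁻¹ * ((u:ℕ):ZMod p)⁻¹ := by
      intro u; push_cast; rw [mul_inv]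
    set A := ∑ u ∈ Ico 1 (m+1), ((u:ℕ):ZMod p)⁻¹ with hA
    have h4 : ∑ u ∈ Ico 1 (m+1), ((3*u : ℕ):ZMod p)⁻¹ = (3:ZMod p)⁻¹ * A := by
      rw [hA, Finset.mul_sum]
      exact Finset.sum_congr rfl fun u _ => h3 u
    have hQ := lemQ p hp hp3
    rw [← Finset.sum_Ico_consecutive (fun j => ((3*j/p : ℕ):ZMod p) * ((3*j : ℕ):ZMod p)⁻¹)
        (show 1 ≤ m+1 by omega) (show m+1 ≤ p by omega),
      ← Finset.sum_Ico_consecutive (fun j => ((3*j/p : ℕ):ZMod p) * ((3*j : ℕ):ZMod p)⁻¹)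
        (show m+1 ≤ 2*m+2 by omega) (show 2*m+2 ≤ p by omega)] at hQ
    have hq1 : ∑ j ∈ Ico 1 (m+1), ((3*j/p : ℕ):ZMod p) * ((3*j : ℕ):ZMod p)⁻¹ = 0 := by
      refine Finset.sum_eq_zero fun j hj => ?_
      rw [mem_Ico] at hj
      have hb : 3*j/p = 0 := Nat.div_eq_of_lt (by omega)
      rw [hb]; simp
    have hq2 : ∑ j ∈ Ico (m+1) (2*m+2), ((3*j/p : ℕ):ZMod p) * ((3*j : ℕ):ZMod p)⁻¹ = 0 := by
      have hB : ∑ j ∈ Ico (m+1) (2*m+2), ((j:ℕ):ZMod p)⁻¹ = 0 := by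
        refine sum_reflect_zero p hp (by omega) _ ?_
        intro j hj; rw [mem_Ico] at hj
        refine ⟨by omega, by omega, ?_⟩; rw [mem_Ico]; omega
      have hc : ∀ j ∈ Ico (m+1) (2*m+2), ((3*j/p : ℕ):ZMod p) * ((3*j : ℕ):ZMod p)⁻¹
          = (3:ZMod p)⁻¹ * ((j:ℕ):ZMod p)⁻¹ := by
        intro j hj; rw [mem_Ico] at hj
        have hb : 3*j/p = 1 := Nat.div_eq_of_lt_le (by omega) (by omega)
        rw [hb, h3]; push_cast; ring
      rw [Finset.sum_congr rfl hc, ← Finset.mul_sum, hB, mul_zero]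
    have hq3 : ∑ j ∈ Ico (2*m+2) p, ((3*j/p : ℕ):ZMod p) * ((3*j : ℕ):ZMod p)⁻¹
        = (2 * (3:ZMod p)⁻¹) * (- A) := by
      have hC : ∑ j ∈ Ico (2*m+2) p, ((j:ℕ):ZMod p)⁻¹ = - A := by
        rw [hA]
        refine sum_reflect p _ _ ?_ ?_
        · intro j hj; rw [mem_Ico] at hj
          refine ⟨by omega, by omega, ?_⟩; rw [mem_Ico]; omega
        · intro j hj; rw [mem_Ico] at hj
          refine ⟨by omega, by omega, ?_⟩; rw [mem_Ico]; omega
      have hc : ∀ j ∈ Ico (2*m+2) p, ((3*j/p : ℕ):ZMod p) * ((3*j : ℕ):ZMod p)⁻¹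
          = (2 * (3:ZMod p)⁻¹) * ((j:ℕ):ZMod p)⁻¹ := by
        intro j hj; rw [mem_Ico] at hj
        have hb : 3*j/p = 2 := Nat.div_eq_of_lt_le (by omega) (by omega)
        rw [hb, h3]; push_cast; ring
      rw [Finset.sum_congr rfl hc, ← Finset.mul_sum, hC]
    rw [hq1, hq2, hq3] at hQ
    rw [h1, h2, h4, hQ]
    push_cast
    ring

theorem stmt8 (p : ℕ) (hp : p.Prime) (hp3 : 3 < p) :
    ratCong p 1
      (∑ k ∈ Finset.range p, (jacobiSym k 3 : ℚ) * harmonic k)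
      (((jacobiSym p 3 : ℚ) - 1) / 4 * ((3 ^ (p - 1) - 1) / p)) := by
  haveI : Fact p.Prime := ⟨hp⟩
  have hp0 : (p:ℚ) ≠ 0 := Nat.cast_ne_zero.mpr hp.ne_zero
  have hfer := fermat3 p hp hp3
  set q : ℕ := (3 ^ (p - 1) - 1) / p with hq
  set Fn : ℕ := (p-1).factorial with hFn
  have hFn0 : (Fn:ℚ) ≠ 0 := Nat.cast_ne_zero.mpr (Nat.factorial_ne_zero _)
  have hD0 : (4 * (Fn:ℚ)) ≠ 0 := mul_ne_zero (by norm_num) hFn0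
  set X : ℤ := ∑ k ∈ range p, chiZ k * 4 * (∑ i ∈ range k, ((Fn / (i+1) : ℕ) : ℤ)) with hX
  set Y : ℤ := (chiZ p - 1) * q * Fn with hY
  -- rational identities
  have hxD : (∑ k ∈ Finset.range p, (jacobiSym (k:ℤ) 3 : ℚ) * harmonic k) * (4*(Fn:ℚ))
      = ((X:ℤ):ℚ) := by
    rw [hX]
    push_cast
    rw [Finset.sum_mul]
    refine Finset.sum_congr rfl fun k hk => ?_
    rw [mem_range] at hk
    have hh : harmonic k * (Fn:ℚ) = ∑ i ∈ range k, ((Fn / (i+1) : ℕ) : ℚ) := by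
      unfold harmonic
      rw [Finset.sum_mul]
      refine Finset.sum_congr rfl fun i hi => ?_
      rw [mem_range] at hi
      have hdvd : (i+1) ∣ Fn := by rw [hFn]; exact Nat.dvd_factorial (by omega) (by omega)
      rw [Nat.cast_div hdvd (by positivity), div_eq_mul_inv]
      ring
    simp only [chiZ]
    calc (jacobiSym (k:ℤ) 3 : ℚ) * harmonic k * (4*(Fn:ℚ))
        = (jacobiSym (k:ℤ) 3 : ℚ) * 4 * (harmonic k * (Fn:ℚ)) := by ring
      _ = (jacobiSym (k:ℤ) 3 : ℚ) * 4 * ∑ i ∈ range k, ((Fn / (i+1) : ℕ) : ℚ) := by rw [hh]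
  have hqrat : ((3:ℚ) ^ (p - 1) - 1) / p = (q:ℚ) := by
    have h1 : (3:ℚ)^(p-1) = 1 + (p:ℚ)*(q:ℚ) := by exact_mod_cast hfer
    rw [h1]
    field_simp
    ring
  have hyD : (((jacobiSym (p:ℤ) 3 : ℚ) - 1) / 4 * ((3 ^ (p - 1) - 1) / p)) * (4*(Fn:ℚ))
      = ((Y:ℤ):ℚ) := by
    rw [hqrat, hY]
    push_cast
    simp only [chiZ]
    ring
  -- the ZMod p computation
  have hstar := star p hp hp3
  have hterm : ∀ i : ℕ, i + 1 < p →
      ((Fn / (i+1) : ℕ) : ZMod p) = ((Fn:ℕ):ZMod p) * ((i+1:ℕ):ZMod p)⁻¹ := by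
    intro i hi
    have hdvd : (i+1) ∣ Fn := by rw [hFn]; exact Nat.dvd_factorial (by omega) (by omega)
    have hne : ((i+1:ℕ):ZMod p) ≠ 0 := by
      rw [Ne, ZMod.natCast_eq_zero_iff]
      intro hd; have := Nat.le_of_dvd (by omega) hd; omega
    have hmul : ((i+1:ℕ):ZMod p) * ((Fn/(i+1) : ℕ):ZMod p) = ((Fn:ℕ):ZMod p) := by
      rw [← Nat.cast_mul, Nat.mul_div_cancel' hdvd]
    calc ((Fn/(i+1) : ℕ):ZMod p)
        = ((i+1:ℕ):ZMod p)⁻¹ * (((i+1:ℕ):ZMod p) * ((Fn/(i+1):ℕ):ZMod p)) := by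
          rw [← mul_assoc, inv_mul_cancel₀ hne, one_mul]
      _ = ((Fn:ℕ):ZMod p) * ((i+1:ℕ):ZMod p)⁻¹ := by rw [hmul]; ring
  have hXbar : ((X : ℤ) : ZMod p)
      = ∑ k ∈ range p, ((chiZ k : ℤ):ZMod p) * 4 *
          (((Fn:ℕ):ZMod p) * ∑ i ∈ range k, ((i+1:ℕ):ZMod p)⁻¹) := by
    rw [hX]
    simp only [Int.cast_sum, Int.cast_mul, Int.cast_natCast, Int.cast_ofNat]
    refine Finset.sum_congr rfl fun k hk => ?_
    rw [mem_range] at hk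
    have hs : ∑ i ∈ range k, ((Fn/(i+1) : ℕ):ZMod p)
        = ((Fn:ℕ):ZMod p) * ∑ i ∈ range k, ((i+1:ℕ):ZMod p)⁻¹ := by
      rw [Finset.mul_sum]
      refine Finset.sum_congr rfl fun i hi => ?_
      rw [mem_range] at hi
      exact hterm i (by omega)
    rw [hs]
  have hXbar2 : ((X : ℤ) : ZMod p)
      = ((Fn:ℕ):ZMod p) * ((((chiZ p : ℤ):ZMod p) - 1) * ((q:ℕ):ZMod p)) := by
    have hr : ∑ k ∈ range p, ((chiZ k : ℤ):ZMod p) * 4 *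
          (((Fn:ℕ):ZMod p) * ∑ i ∈ range k, ((i+1:ℕ):ZMod p)⁻¹)
        = ((Fn:ℕ):ZMod p) * (4 * ∑ k ∈ range p, ((chiZ k : ℤ):ZMod p) *
            ∑ i ∈ range k, ((i+1:ℕ):ZMod p)⁻¹) := by
      rw [← mul_assoc, Finset.mul_sum]
      exact Finset.sum_congr rfl fun k hk => by ring
    rw [hXbar, hr, hstar]
  have hYbar : ((Y : ℤ) : ZMod p)
      = ((((chiZ p : ℤ):ZMod p) - 1) * ((q:ℕ):ZMod p)) * ((Fn:ℕ):ZMod p) := by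
    rw [hY]; push_cast; ring
  have hXY : ((X - Y : ℤ) : ZMod p) = 0 := by
    rw [Int.cast_sub, hXbar2, hYbar]; ring
  have hdvd : (p:ℤ) ∣ X - Y := by
    rwa [← ZMod.intCast_zmod_eq_zero_iff_dvd]
  obtain ⟨N, hN⟩ := hdvd
  refine ⟨(N:ℚ) / (4 * (Fn:ℚ)), ?_, ?_⟩
  · rw [pow_one]
    have h7 : (p:ℚ) * ((N:ℚ) / (4*(Fn:ℚ))) = ((p:ℚ) * (N:ℚ)) / (4*(Fn:ℚ)) := by ring
    rw [h7, eq_div_iff hD0, sub_mul, hxD, hyD]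
    exact_mod_cast congrArg (fun z : ℤ => (z:ℚ)) hN
  · intro hden
    have h8 : (N:ℚ) / (4*(Fn:ℚ)) = Rat.divInt N ((4*Fn : ℕ) : ℤ) := by
      rw [Rat.divInt_eq_div]; push_cast; ring
    have h9 : (((N:ℚ) / (4*(Fn:ℚ))).den : ℤ) ∣ ((4*Fn : ℕ) : ℤ) := by
      rw [h8]; exact Rat.den_dvd N ((4*Fn : ℕ) : ℤ)
    have h10 : ((N:ℚ) / (4*(Fn:ℚ))).den ∣ 4*Fn := Int.natCast_dvd_natCast.mp h9
    have h11 : p ∣ 4 * Fn := dvd_trans hden h10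
    rcases (Nat.Prime.dvd_mul hp).mp h11 with h | h
    · have := Nat.le_of_dvd (by norm_num) h
      have hp4 : p = 4 := by omega
      rw [hp4] at hp
      norm_num at hp
    · rw [hFn] at h
      rw [Nat.Prime.dvd_factorial hp] at h
      omega
end

section
/- For any prime p > 3, ∑_{k=0}^{p-1} (−1)^k·χ(k)·k·H_k ≡ (1 − (p/3))/2 (mod p) as rational numbers, where χ(k) is the Jacobi symbol (k/3) and (p/3) is the Jacobi symbol of p modulo 3. -/
open Finset

def χz (k : ℕ) : ℤ := if k % 3 = 0 then 0 else if k % 3 = 1 then 1 else -1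

lemma jacobi_two_three : jacobiSym 2 3 = -1 := by
  have h : jacobiSym 2 3 = jacobiSym (-1) 3 := jacobiSym.mod_left' (by decide)
  rw [h, jacobiSym.at_neg_one (by decide), ZMod.χ₄_nat_three_mod_four (by norm_num)]

lemma chiz_jacobi (k : ℕ) : (jacobiSym k 3 : ℤ) = χz k := by
  rw [jacobiSym.mod_left]
  have h : (k : ℤ) % (3:ℕ) = ((k % 3 : ℕ) : ℤ) := by push_cast; rfl
  rw [h]
  have h3 : k % 3 = 0 ∨ k % 3 = 1 ∨ k % 3 = 2 := by omega
  rcases h3 with h3 | h3 | h3 <;> rw [h3] <;> simp [χz, h3]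
  · exact jacobiSym.zero_left (by norm_num)
  · exact jacobi_two_three

lemma pow_neg_one (k : ℕ) : ((-1:ℤ)^k) = if k % 2 = 0 then 1 else -1 := by
  rcases Nat.even_or_odd k with h | h
  · simp [h.neg_one_pow, Nat.even_iff.mp h]
  · simp [h.neg_one_pow, Nat.odd_iff.mp h]

def fz (k : ℕ) : ℤ := (-1)^k * χz k * k

def Gz (n : ℕ) : ℤ := ∑ k ∈ range n, fz k

def Gc (n : ℕ) : ℤ :=
  if n % 6 = 0 then n else if n % 6 = 1 then (n:ℤ) - 1 else if n % 6 = 2 then -1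
  else if n % 6 = 3 then -(n:ℤ) else if n % 6 = 4 then 1 - (n:ℤ) else 1

lemma Gz_eq (n : ℕ) : Gz n = Gc n := by
  induction n with
  | zero => simp [Gz, Gc]
  | succ n ih =>
    rw [Gz, Finset.sum_range_succ, ← Gz, ih]
    have h6 : n % 6 = 0 ∨ n % 6 = 1 ∨ n % 6 = 2 ∨ n % 6 = 3 ∨ n % 6 = 4 ∨ n % 6 = 5 := by omega
    rcases h6 with h | h | h | h | h | h <;>
    · have h2 : n % 2 = n % 6 % 2 := by omega
      have h3 : n % 3 = n % 6 % 3 := by omega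
      have h6' : (n+1) % 6 = (n % 6 + 1) % 6 := by omega
      rw [h] at h2 h3 h6'
      simp only [fz, χz, Gc, pow_neg_one, h, h2, h3, h6']
      norm_num
      try push_cast
      try ring

def az (j : ℕ) : ℤ :=
  if j % 6 = 0 ∨ j % 6 = 1 then 1 else if j % 6 = 3 ∨ j % 6 = 4 then -1 else 0

def gz (j : ℕ) : ℤ := (-1)^j * χz j

lemma Gc_decomp (j : ℕ) : Gc j = az j * j + gz j := by
  have h6 : j % 6 = 0 ∨ j % 6 = 1 ∨ j % 6 = 2 ∨ j % 6 = 3 ∨ j % 6 = 4 ∨ j % 6 = 5 := by omega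
  rcases h6 with h | h | h | h | h | h <;>
  · have h2 : j % 2 = j % 6 % 2 := by omega
    have h3 : j % 3 = j % 6 % 3 := by omega
    rw [h] at h2 h3
    simp only [Gc, az, gz, χz, pow_neg_one, h, h2, h3]
    norm_num
    try ring

def Az (n : ℕ) : ℤ := ∑ j ∈ Finset.Icc 1 n, az j

def Ac (n : ℕ) : ℤ :=
  if n % 6 = 1 ∨ n % 6 = 2 then 1 else if n % 6 = 4 ∨ n % 6 = 5 then -1 else 0

lemma Az_eq (n : ℕ) : Az n = Ac n := by
  induction n with
  | zero => simp [Az, Ac]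
  | succ n ih =>
    rw [Az, Finset.sum_Icc_succ_top (Nat.one_le_iff_ne_zero.mpr (Nat.succ_ne_zero n)), ← Az, ih]
    have h6 : n % 6 = 0 ∨ n % 6 = 1 ∨ n % 6 = 2 ∨ n % 6 = 3 ∨ n % 6 = 4 ∨ n % 6 = 5 := by omega
    rcases h6 with h | h | h | h | h | h <;>
    · have h6' : (n+1) % 6 = (n % 6 + 1) % 6 := by omega
      rw [h] at h6'
      simp only [Ac, az, h, h6']
      norm_num

lemma chiz_rec (b : ℕ) : χz b + χz (b+1) = -χz (b+2) := by
  have h3 : b % 3 = 0 ∨ b % 3 = 1 ∨ b % 3 = 2 := by omega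
  rcases h3 with h | h | h <;>
  · have h1 : (b+1) % 3 = (b % 3 + 1) % 3 := by omega
    have h2 : (b+2) % 3 = (b % 3 + 2) % 3 := by omega
    rw [h] at h1 h2
    simp only [χz, h, h1, h2]
    norm_num

lemma Sb (n : ℕ) : ∀ a : ℕ,
    ∑ j ∈ range (n+1), χz (j+a) * (n.choose j : ℤ) = (-1)^n * χz (a + 2*n) := by
  induction n with
  | zero => intro a; simp
  | succ n ih =>
    intro a
    have hshift : ∑ i ∈ range (n+1), χz ((i+1)+a) * (n.choose (i+1) : ℤ)
        = (∑ j ∈ range (n+1), χz (j+a) * (n.choose j : ℤ)) - χz a := by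
      have h2 := Finset.sum_range_succ' (fun j => χz (j+a) * (n.choose j : ℤ)) (n+1)
      rw [Finset.sum_range_succ] at h2
      have hz : χz (n+1+a) * (n.choose (n+1) : ℤ) = 0 := by
        rw [Nat.choose_succ_self]; simp
      simp only [hz, zero_add] at h2
      simp only [Nat.zero_add, Nat.choose_zero_right, Nat.cast_one, mul_one] at h2
      linarith [h2]
    have key : ∑ j ∈ range (n+2), χz (j+a) * ((n+1).choose j : ℤ)
        = (∑ j ∈ range (n+1), χz (j+(a+1)) * (n.choose j : ℤ))
          + ((∑ j ∈ range (n+1), χz (j+a) * (n.choose j : ℤ)) - χz a) + χz a := by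
      rw [Finset.sum_range_succ' (fun j => χz (j+a) * ((n+1).choose j : ℤ)) (n+1)]
      rw [← hshift]
      rw [← Finset.sum_add_distrib]
      congr 1
      · apply Finset.sum_congr rfl
        intro i _
        rw [Nat.choose_succ_succ]
        push_cast
        rw [show i + 1 + a = i + (a+1) by ring, show i + (a+1) = (i+1) + a by ring]
        ring
      · simp
    rw [key, ih (a+1), ih a]
    have hrec : χz (a + 2*n) + χz (a + 2*n + 1) = -χz (a + 2*n + 2) := chiz_rec _
    rw [show a + 1 + 2*n = a + 2*n + 1 by ring, show a + 2*(n+1) = a + 2*n + 2 by ring, pow_succ]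
    linear_combination ((-1:ℤ)^n) * hrec

lemma p_mod3 (p : ℕ) (hp : p.Prime) (hp3 : 3 < p) : p % 3 = 1 ∨ p % 3 = 2 := by
  by_cases hd : 3 ∣ p
  · rcases (Nat.Prime.eq_one_or_self_of_dvd hp 3 hd) with h1 | h1 <;> omega
  · omega

lemma sum_choose_p (p : ℕ) (hp : p.Prime) (hp3 : 3 < p) :
    ∑ j ∈ Finset.Icc 1 (p-1), χz j * (p.choose j : ℤ) = 0 := by
  have h := Sb p 0
  have hodd : Odd p := hp.odd_of_ne_two (by omega)
  have hneg : ((-1:ℤ))^p = -1 := hodd.neg_one_pow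
  have h3 := p_mod3 p hp hp3
  have hfull : ∑ j ∈ range (p+1), χz (j+0) * (p.choose j : ℤ) = χz p := by
    rw [h, hneg]
    have h2p : (0 + 2*p) % 3 = (2 * (p % 3)) % 3 := by omega
    rcases h3 with h3 | h3 <;>
    · simp only [χz, h2p, h3]
      norm_num
  have hIcc : Finset.Icc 1 (p-1) = Finset.Ico 1 p := by
    rw [← Finset.Ico_add_one_right_eq_Icc]
    congr 1
    omega
  have hsplit : ∑ j ∈ range (p+1), χz (j+0) * (p.choose j : ℤ)
      = χz 0 * (p.choose 0 : ℤ) + (∑ j ∈ Finset.Icc 1 (p-1), χz j * (p.choose j : ℤ))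
        + χz p * (p.choose p : ℤ) := by
    rw [Finset.sum_range_succ, Finset.range_eq_Ico,
      Finset.sum_eq_sum_Ico_succ_bot (show 0 < p by omega), hIcc]
    simp only [Nat.add_zero, Nat.zero_add]
  rw [hfull] at hsplit
  have hχ0 : χz 0 = 0 := by simp [χz]
  have hcp : (p.choose p : ℤ) = 1 := by simp
  rw [hχ0, hcp] at hsplit
  linarith [hsplit]

lemma choose_pred (p : ℕ) (hp : p.Prime) : ∀ j, j < p → ((Nat.choose (p-1) j : ZMod p)) = (-1)^j := by
  intro j
  induction j with
  | zero => intro _; simp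
  | succ j ih =>
    intro hj
    have hih := ih (by omega)
    have hpas : (p-1).choose j + (p-1).choose (j+1) = p.choose (j+1) := by
      rw [← Nat.choose_succ_succ]
      congr 1
      omega
    have hdvd : p ∣ p.choose (j+1) := Nat.Prime.dvd_choose_self hp (by omega) hj
    have hz : ((p.choose (j+1) : ℕ) : ZMod p) = 0 :=
      (ZMod.natCast_eq_zero_iff _ _).mpr hdvd
    have hcast : ((p-1).choose j : ZMod p) + ((p-1).choose (j+1) : ZMod p) = 0 := by
      rw [← Nat.cast_add, hpas, hz]
    rw [hih] at hcast
    rw [pow_succ]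
    linear_combination hcast

lemma inv_eq (p : ℕ) (hp : p.Prime) (j : ℕ) (h1 : 1 ≤ j) (h2 : j ≤ p - 1) :
    ((j : ZMod p))⁻¹ = (-1)^(j-1) * ((p.choose j / p : ℕ) : ZMod p) := by
  haveI := Fact.mk hp
  have hp1 : 1 ≤ p := by have := hp.one_lt; omega
  have hlt : j < p := by omega
  have hdvd : p ∣ p.choose j := Nat.Prime.dvd_choose_self hp (by omega) hlt
  obtain ⟨m, hm⟩ := hdvd
  have hmul : j * (p.choose j / p) = (p-1).choose (j-1) := by
    have h := Nat.add_one_mul_choose_eq (p-1) (j-1)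
    rw [Nat.sub_add_cancel (by omega : 1 ≤ p), Nat.sub_add_cancel (by omega : 1 ≤ j)] at h
    -- h : p * (p-1).choose (j-1) = p.choose j * j
    rw [hm, Nat.mul_div_cancel_left m (by omega : 0 < p)]
    rw [hm] at h
    have : (p-1).choose (j-1) = m * j := by
      apply Nat.eq_of_mul_eq_mul_left (show 0 < p by omega)
      rw [h]; ring
    rw [this, Nat.mul_comm]
  have hcast : (j : ZMod p) * ((p.choose j / p : ℕ) : ZMod p) = (-1)^(j-1) := by
    rw [← Nat.cast_mul, hmul]
    exact choose_pred p hp (j-1) (by omega)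
  symm
  apply eq_inv_of_mul_eq_one_right
  calc (j : ZMod p) * ((-1)^(j-1) * ((p.choose j / p : ℕ) : ZMod p))
      = (-1)^(j-1) * ((j : ZMod p) * ((p.choose j / p : ℕ) : ZMod p)) := by ring
    _ = (-1)^(j-1) * (-1)^(j-1) := by rw [hcast]
    _ = 1 := by
        rw [← pow_add]
        exact Even.neg_one_pow ⟨j-1, by omega⟩

lemma sum_cast_fun (p : ℕ) [hpf : Fact p.Prime] (f : ZMod p → ZMod p) (hf : f 0 = 0) :
    ∑ j ∈ Finset.Icc 1 (p-1), f ((j : ZMod p)) = ∑ x : ZMod p, f x := by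
  have hp : p.Prime := hpf.out
  have h1 : ∑ j ∈ Finset.Icc 1 (p-1), f ((j : ZMod p))
      = ∑ x ∈ (Finset.univ : Finset (ZMod p)).erase 0, f x := by
    refine Finset.sum_nbij' (fun a => ((a : ZMod p))) (fun x => x.val) ?_ ?_ ?_ ?_ ?_
    · intro a ha
      simp only [Finset.mem_Icc] at ha
      rw [Finset.mem_erase]
      refine ⟨?_, Finset.mem_univ _⟩
      intro h0
      have hd := (ZMod.natCast_eq_zero_iff a p).mp h0
      have := Nat.le_of_dvd (by omega) hd
      have := hp.two_le
      omega
    · intro x hx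
      rw [Finset.mem_erase] at hx
      simp only [Finset.mem_Icc]
      have hv : x.val < p := ZMod.val_lt x
      have hv0 : x.val ≠ 0 := fun h => hx.1 ((ZMod.val_eq_zero x).mp h)
      omega
    · intro a ha
      simp only [Finset.mem_Icc] at ha
      have := hp.two_le
      exact ZMod.val_cast_of_lt (by omega)
    · intro x _
      exact ZMod.natCast_rightInverse x
    · intro a _
      rfl
  rw [h1]
  exact Finset.sum_erase _ hf

lemma sum_inv_zero (p : ℕ) (hp : p.Prime) (hp3 : 3 < p) :
    ∑ j ∈ Finset.Icc 1 (p-1), ((j : ZMod p))⁻¹ = 0 := by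
  haveI := Fact.mk hp
  rw [sum_cast_fun p (fun x => x⁻¹) (by simp)]
  have h2 : ∑ x : ZMod p, x⁻¹ = ∑ x : ZMod p, x := Equiv.sum_comp (Equiv.inv (ZMod p)) id
  rw [h2]
  have h3 : ∑ x : ZMod p, x = ∑ x : ZMod p, -x := (Equiv.sum_comp (Equiv.neg (ZMod p)) id).symm
  rw [Finset.sum_neg_distrib] at h3
  have h4 : (2 : ZMod p) * ∑ x : ZMod p, x = 0 := by linear_combination h3
  have h5 : (2 : ZMod p) ≠ 0 := by
    intro h
    have h2' : ((2 : ℕ) : ZMod p) = 0 := by exact_mod_cast h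
    have hd := (ZMod.natCast_eq_zero_iff 2 p).mp h2'
    have := Nat.le_of_dvd (by omega) hd
    omega
  exact (mul_eq_zero.mp h4).resolve_left h5

lemma T_zero (p : ℕ) (hp : p.Prime) (hp3 : 3 < p) :
    ∑ j ∈ Finset.Icc 1 (p-1), (gz j : ZMod p) * ((j : ZMod p))⁻¹ = 0 := by
  haveI := Fact.mk hp
  have hterm : ∀ j ∈ Finset.Icc 1 (p-1), (gz j : ZMod p) * ((j : ZMod p))⁻¹
      = ((-(χz j * ((p.choose j / p : ℕ) : ℤ)) : ℤ) : ZMod p) := by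
    intro j hj
    rw [Finset.mem_Icc] at hj
    rw [inv_eq p hp j hj.1 hj.2]
    have hsign : ((-1 : ZMod p))^j * (-1)^(j-1) = -1 := by
      rw [← pow_add]
      have hodd : j + (j-1) = 2*(j-1)+1 := by omega
      rw [hodd, pow_succ, pow_mul]
      simp
    have hgz : ((gz j : ℤ) : ZMod p) = (-1)^j * ((χz j : ℤ) : ZMod p) := by
      rw [gz]; push_cast; ring
    rw [hgz]
    simp only [Int.cast_neg, Int.cast_mul, Int.cast_natCast]
    calc ((-1 : ZMod p))^j * (χz j : ZMod p) * ((-1)^(j-1) * ((p.choose j / p : ℕ) : ZMod p))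
        = ((-1 : ZMod p))^j * (-1)^(j-1) * ((χz j : ZMod p) * ((p.choose j / p : ℕ) : ZMod p)) := by
          ring
      _ = -((χz j : ZMod p) * ((p.choose j / p : ℕ) : ZMod p)) := by rw [hsign]; ring
  rw [Finset.sum_congr rfl hterm]
  have hX : ∑ j ∈ Finset.Icc 1 (p-1), χz j * ((p.choose j / p : ℕ) : ℤ) = 0 := by
    have hC : ∀ j ∈ Finset.Icc 1 (p-1), χz j * (p.choose j : ℤ)
        = (p : ℤ) * (χz j * ((p.choose j / p : ℕ) : ℤ)) := by
      intro j hj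
      rw [Finset.mem_Icc] at hj
      have hdvd : p ∣ p.choose j := Nat.Prime.dvd_choose_self hp (by omega) (by omega)
      have hmd := Nat.mul_div_cancel' hdvd
      have hcast : (p.choose j : ℤ) = (p:ℤ) * ((p.choose j / p : ℕ) : ℤ) := by
        exact_mod_cast hmd.symm
      rw [hcast]; ring
    have h0 := sum_choose_p p hp hp3
    rw [Finset.sum_congr rfl hC, ← Finset.mul_sum] at h0
    rcases mul_eq_zero.mp h0 with h | h
    · exfalso; have := hp.two_le; omega
    · exact h
  rw [← Int.cast_sum]
  have : ∑ j ∈ Finset.Icc 1 (p-1), -(χz j * ((p.choose j / p : ℕ) : ℤ))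
      = -∑ j ∈ Finset.Icc 1 (p-1), χz j * ((p.choose j / p : ℕ) : ℤ) := by
    rw [Finset.sum_neg_distrib]
  rw [this, hX]
  simp

lemma core (p : ℕ) (hp : p.Prime) (hp3 : 3 < p) :
    ∑ k ∈ range p, (fz k : ZMod p) * (∑ j ∈ Finset.Icc 1 k, ((j : ZMod p))⁻¹)
      = if p % 3 = 1 then 0 else 1 := by
  haveI := Fact.mk hp
  have h1 : ∑ k ∈ range p, (fz k : ZMod p) * (∑ j ∈ Finset.Icc 1 k, ((j : ZMod p))⁻¹)
      = ∑ k ∈ range p, ∑ j ∈ Finset.Icc 1 k, (fz k : ZMod p) * ((j : ZMod p))⁻¹ :=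
    Finset.sum_congr rfl fun k _ => Finset.mul_sum _ _ _
  have h2 : ∑ k ∈ range p, ∑ j ∈ Finset.Icc 1 k, (fz k : ZMod p) * ((j : ZMod p))⁻¹
      = ∑ j ∈ Finset.Icc 1 (p-1), ∑ k ∈ Finset.Ico j p, (fz k : ZMod p) * ((j : ZMod p))⁻¹ := by
    rw [Finset.range_eq_Ico, Finset.sum_eq_sum_Ico_succ_bot (show 0 < p by omega)]
    have hz : ∑ j ∈ Finset.Icc (1:ℕ) 0, (fz 0 : ZMod p) * ((j : ZMod p))⁻¹ = 0 := by simp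
    rw [hz, zero_add]
    have he : ∀ k, Finset.Icc 1 k = Finset.Ico 1 (k+1) := fun k => (Finset.Ico_add_one_right_eq_Icc 1 k).symm
    have hIcc : Finset.Icc 1 (p-1) = Finset.Ico 1 p := by
      rw [← Finset.Ico_add_one_right_eq_Icc]; congr 1; omega
    rw [hIcc]
    have hcomm := Finset.sum_Ico_Ico_comm 1 p (fun j k => (fz k : ZMod p) * ((j : ZMod p))⁻¹)
    have hstep : ∑ k ∈ Finset.Ico (0+1) p, ∑ j ∈ Finset.Icc 1 k, (fz k : ZMod p) * ((j : ZMod p))⁻¹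
        = ∑ k ∈ Finset.Ico 1 p, ∑ j ∈ Finset.Ico 1 (k+1), (fz k : ZMod p) * ((j : ZMod p))⁻¹ := by
      norm_num
      exact Finset.sum_congr rfl fun k _ => by rw [he k]
    rw [hstep, ← hcomm]
  have h3 : ∀ j ∈ Finset.Icc 1 (p-1), ∑ k ∈ Finset.Ico j p, (fz k : ZMod p) * ((j : ZMod p))⁻¹
      = (((Gc p : ℤ) : ZMod p) - ((Gc j : ℤ) : ZMod p)) * ((j : ZMod p))⁻¹ := by
    intro j hj
    rw [Finset.mem_Icc] at hj
    rw [← Finset.sum_mul]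
    congr 1
    rw [Finset.sum_Ico_eq_sub (fun k => (fz k : ZMod p)) (by omega : j ≤ p)]
    have hG : ∀ n : ℕ, ((Gz n : ℤ) : ZMod p) = ∑ k ∈ range n, (fz k : ZMod p) := by
      intro n; rw [Gz]; push_cast; rfl
    rw [← hG, ← hG, Gz_eq, Gz_eq]
  rw [h1, h2, Finset.sum_congr rfl h3]
  have h4 : ∀ j ∈ Finset.Icc 1 (p-1),
      (((Gc p : ℤ) : ZMod p) - ((Gc j : ℤ) : ZMod p)) * ((j : ZMod p))⁻¹
      = ((Gc p : ℤ) : ZMod p) * ((j : ZMod p))⁻¹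
        - ((az j : ZMod p) + (gz j : ZMod p) * ((j : ZMod p))⁻¹) := by
    intro j hj
    rw [Finset.mem_Icc] at hj
    have hj0 : ((j : ZMod p)) ≠ 0 := by
      intro h0
      have hd := (ZMod.natCast_eq_zero_iff j p).mp h0
      have := Nat.le_of_dvd (by omega) hd
      omega
    have hju : (j : ZMod p) * ((j : ZMod p))⁻¹ = 1 := mul_inv_cancel₀ hj0
    have hdec : ((Gc j : ℤ) : ZMod p) = (az j : ZMod p) * (j : ZMod p) + (gz j : ZMod p) := by
      rw [Gc_decomp]; push_cast; ring
    rw [hdec]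
    calc (((Gc p : ℤ) : ZMod p) - ((az j : ZMod p) * (j : ZMod p) + (gz j : ZMod p)))
          * ((j : ZMod p))⁻¹
        = ((Gc p : ℤ) : ZMod p) * ((j : ZMod p))⁻¹
          - ((az j : ZMod p) * ((j : ZMod p) * ((j : ZMod p))⁻¹)
            + (gz j : ZMod p) * ((j : ZMod p))⁻¹) := by ring
      _ = _ := by rw [hju]; ring
  rw [Finset.sum_congr rfl h4, Finset.sum_sub_distrib, ← Finset.mul_sum, sum_inv_zero p hp hp3,
    mul_zero, Finset.sum_add_distrib, T_zero p hp hp3, add_zero, zero_sub]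
  have hAz : ∑ j ∈ Finset.Icc 1 (p-1), (az j : ZMod p) = ((Az (p-1) : ℤ) : ZMod p) := by
    rw [Az]; push_cast; rfl
  rw [hAz, Az_eq]
  have hodd : p % 2 = 1 := Nat.odd_iff.mp (hp.odd_of_ne_two (by omega))
  have h3p := p_mod3 p hp hp3
  have h6 : p % 6 = 1 ∨ p % 6 = 5 := by omega
  rcases h6 with h | h
  · have hp3' : p % 3 = 1 := by omega
    have : (p-1) % 6 = 0 := by omega
    simp [Ac, this, hp3']
  · have hp3' : p % 3 = 2 := by omega
    have : (p-1) % 6 = 4 := by omega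
    simp [Ac, this, hp3']

def hnum (p k : ℕ) : ℕ := ∑ j ∈ Finset.Icc 1 k, (p-1).factorial / j

lemma hnum_cast_Q (p k : ℕ) (hk : k ≤ p-1) :
    ((hnum p k : ℕ) : ℚ) = (((p-1).factorial : ℕ) : ℚ) * harmonic k := by
  rw [hnum, harmonic]
  have hIcc : Finset.Icc 1 k = Finset.Ico 1 (k+1) := (Finset.Ico_add_one_right_eq_Icc 1 k).symm
  rw [hIcc, Finset.sum_Ico_eq_sum_range]
  simp only [Nat.add_sub_cancel]
  rw [Nat.cast_sum, Finset.mul_sum]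
  apply Finset.sum_congr rfl
  intro i hi
  rw [Finset.mem_range] at hi
  have hdvd : (1+i) ∣ (p-1).factorial := Nat.dvd_factorial (by omega) (by omega)
  rw [show 1+i = i+1 by omega] at hdvd ⊢
  rw [Nat.cast_div hdvd (by positivity), div_eq_mul_inv]

lemma hnum_cast_K (p : ℕ) (hp : p.Prime) (k : ℕ) (hk : k ≤ p-1) :
    ((hnum p k : ℕ) : ZMod p) = (((p-1).factorial : ℕ) : ZMod p) * ∑ j ∈ Finset.Icc 1 k, ((j : ZMod p))⁻¹ := by
  haveI := Fact.mk hp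
  rw [hnum, Nat.cast_sum, Finset.mul_sum]
  apply Finset.sum_congr rfl
  intro j hj
  rw [Finset.mem_Icc] at hj
  have hdvd : j ∣ (p-1).factorial := Nat.dvd_factorial (by omega) (by omega)
  have hmd : j * ((p-1).factorial / j) = (p-1).factorial := Nat.mul_div_cancel' hdvd
  have hj0 : ((j : ZMod p)) ≠ 0 := by
    intro h0
    have hd := (ZMod.natCast_eq_zero_iff j p).mp h0
    have := Nat.le_of_dvd (by omega) hd
    have := hp.two_le
    omega
  have hju : (j : ZMod p) * ((j : ZMod p))⁻¹ = 1 := mul_inv_cancel₀ hj0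
  have hcast : (j : ZMod p) * (((p-1).factorial / j : ℕ) : ZMod p) = (((p-1).factorial : ℕ) : ZMod p) := by
    rw [← Nat.cast_mul, hmd]
  calc (((p-1).factorial / j : ℕ) : ZMod p)
      = ((j : ZMod p) * (((p-1).factorial / j : ℕ) : ZMod p)) * ((j : ZMod p))⁻¹ := by
        rw [mul_comm (j : ZMod p), mul_assoc, hju, mul_one]
    _ = (((p-1).factorial : ℕ) : ZMod p) * ((j : ZMod p))⁻¹ := by rw [hcast]

theorem stmt9 (p : ℕ) (hp : p.Prime) (hp3 : 3 < p) :
    ratCong p 1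
      (∑ k ∈ Finset.range p, (-1 : ℚ) ^ k * (jacobiSym k 3 : ℚ) * k * harmonic k)
      ((1 - (jacobiSym p 3 : ℚ)) / 2) := by
  haveI := Fact.mk hp
  set S : ℚ := ∑ k ∈ Finset.range p, (-1 : ℚ) ^ k * (jacobiSym k 3 : ℚ) * k * harmonic k with hS
  set c : ℚ := (1 - (jacobiSym p 3 : ℚ)) / 2 with hc
  set Fc : ℕ := (p-1).factorial with hFc
  set c' : ℤ := if p % 3 = 1 then 0 else 1 with hc'
  set M : ℤ := (∑ k ∈ Finset.range p, fz k * (hnum p k : ℤ)) - c' * (Fc : ℤ) with hM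
  have hFcpos : 0 < Fc := Nat.factorial_pos _
  have hFc0 : (Fc : ℚ) ≠ 0 := by positivity
  have hjp : (jacobiSym (p:ℤ) 3) = χz p := chiz_jacobi p
  have h3p := p_mod3 p hp hp3
  have hcc : (c' : ℚ) = c := by
    rw [hc, hc', hjp]
    rcases h3p with h | h
    · have hv : χz p = 1 := by simp [χz, h]
      rw [hv, h]
      norm_num
    · have hv : χz p = -1 := by simp [χz, h]
      rw [hv, h]
      norm_num
  have hMQ : (M : ℚ) = (Fc : ℚ) * (S - c) := by
    have hsum : ((∑ k ∈ Finset.range p, fz k * (hnum p k : ℤ) : ℤ) : ℚ)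
        = ∑ k ∈ Finset.range p, (Fc:ℚ) * ((-1 : ℚ) ^ k * (jacobiSym (k:ℤ) 3 : ℚ) * k * harmonic k) := by
      push_cast
      apply Finset.sum_congr rfl
      intro k hk
      rw [Finset.mem_range] at hk
      have hh := hnum_cast_Q p k (by omega)
      have hfz : ((fz k : ℤ) : ℚ) = (-1:ℚ)^k * ((χz k : ℤ) : ℚ) * k := by
        rw [fz]; push_cast; ring
      rw [hfz, chiz_jacobi k]
      push_cast at hh ⊢
      rw [hh]
      ring
    rw [hM, Int.cast_sub, hsum, Int.cast_mul, Int.cast_natCast, hcc, hS, mul_sub, Finset.mul_sum]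
    ring
  have hMK : (M : ZMod p) = 0 := by
    have hcore := core p hp hp3
    have hcK : ((c' : ℤ) : ZMod p) = if p % 3 = 1 then (0 : ZMod p) else 1 := by
      rw [hc']; split <;> simp
    have hterm : ∀ k ∈ Finset.range p, ((fz k * (hnum p k : ℤ) : ℤ) : ZMod p)
        = ((Fc : ℕ) : ZMod p) * ((fz k : ZMod p) * ∑ j ∈ Finset.Icc 1 k, ((j : ZMod p))⁻¹) := by
      intro k hk
      rw [Finset.mem_range] at hk
      rw [Int.cast_mul, Int.cast_natCast]
      rw [hnum_cast_K p hp k (by omega)]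
      ring
    rw [hM, Int.cast_sub, Int.cast_sum, Int.cast_mul, Int.cast_natCast]
    rw [Finset.sum_congr rfl hterm, ← Finset.mul_sum, hcore, hcK]
    ring
  have hpd : (p:ℤ) ∣ M := (ZMod.intCast_zmod_eq_zero_iff_dvd M p).mp hMK
  obtain ⟨N, hN⟩ := hpd
  refine ⟨(N:ℚ) / (Fc:ℚ), ?_, ?_⟩
  · rw [pow_one]
    have key : S - c = (M:ℚ) / (Fc:ℚ) := by
      rw [hMQ]
      field_simp
    rw [key, hN]
    push_cast
    rw [mul_div_assoc]
  · intro hdvd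
    have h2 : ((((N:ℚ))/(Fc:ℚ)).den : ℤ) ∣ (Fc:ℤ) := by
      have hd := Rat.den_dvd N (Fc:ℤ)
      rw [Rat.divInt_eq_div] at hd
      push_cast at hd
      exact hd
    have h3 : (((N:ℚ)/(Fc:ℚ)).den) ∣ Fc := Int.ofNat_dvd.mp h2
    have h4 : p ∣ Fc := dvd_trans hdvd h3
    have h5 : p ≤ p - 1 := (Nat.Prime.dvd_factorial hp).mp h4
    omega
end
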